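/- arXiv:1607.04025 — 7 statements merged into one kernel-verified Lean document; each statement's English description precedes it below -/
import Mathlib

section
/- Every synchronizing deterministic finite automaton with n states has a reset word of length at most (n³ - n)/6. -/
/-- Action of a word on a state. -/
def actW {Q A : Type*} (δ : Q → A → Q) (q : Q) (w : List A) : Q := w.foldl δ q

/-- Image of the full state set under a word. -/
def img {Q A : Type*} [Fintype Q] [DecidableEq Q] (δ : Q → A → Q) (w : List A) : Finset Q :=
  Finset.univ.image (fun q => actW δ q w)

open Finset

set_option linter.unusedSectionVars false

section Det
variable {c : ℕ}
def bE (i : Fin (c+2)) : Fin (c+2) → ℝ := fun j => if i = j then 1 else 0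
noncomputable def detB (rest : Fin c → Fin (c+2) → ℝ) (x y : Fin (c+2) → ℝ) : ℝ :=
  Matrix.det (Matrix.of (Fin.cons x (Fin.cons y rest)))
lemma pi_sum_bE (x : Fin (c+2) → ℝ) : x = ∑ i, x i • bE i := by
  funext j
  rw [Finset.sum_apply]
  simp [bE, Pi.smul_apply, smul_eq_mul, mul_ite]

lemma detB_swap (rest : Fin c → Fin (c+2) → ℝ) (x y : Fin (c+2) → ℝ) :
    detB rest y x = - detB rest x y := by
  have h : (Fin.cons y (Fin.cons x rest) : Fin (c+2) → Fin (c+2) → ℝ)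
      = (Fin.cons x (Fin.cons y rest)) ∘ Equiv.swap 0 1 := by
    funext i
    refine Fin.cases ?_ (fun j => ?_) i
    · simp only [Function.comp_apply, Equiv.swap_apply_left, Fin.cons_zero,
        ← Fin.succ_zero_eq_one, Fin.cons_succ]
    · refine Fin.cases ?_ (fun l => ?_) j
      · simp only [Function.comp_apply, Fin.cons_succ, Fin.cons_zero]
        rw [Fin.succ_zero_eq_one, Equiv.swap_apply_right, Fin.cons_zero]
      · have h1 : (l.succ.succ : Fin (c+2)) ≠ 0 := Fin.succ_ne_zero _
        have h2 : (l.succ.succ : Fin (c+2)) ≠ 1 := by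
          rw [← Fin.succ_zero_eq_one]
          exact fun h => Fin.succ_ne_zero _ (Fin.succ_injective _ h)
        simp only [Function.comp_apply, Equiv.swap_apply_of_ne_of_ne h1 h2, Fin.cons_succ]
  show (Matrix.detRowAlternating (Fin.cons y (Fin.cons x rest)) : ℝ) = _
  rw [h, AlternatingMap.map_swap _ _ (by simp : (0 : Fin (c+2)) ≠ 1)]
  rfl

lemma detB_self (rest : Fin c → Fin (c+2) → ℝ) (x : Fin (c+2) → ℝ) :
    detB rest x x = 0 := by
  have := detB_swap rest x x
  linarith

lemma detB_eq_zero_left (rest : Fin c → Fin (c+2) → ℝ) (x y : Fin (c+2) → ℝ)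
    (l : Fin c) (h : rest l = x) : detB rest x y = 0 := by
  refine Matrix.det_zero_of_row_eq (M := Matrix.of (Fin.cons x (Fin.cons y rest)))
    (i := 0) (j := l.succ.succ) (Ne.symm (Fin.succ_ne_zero _)) ?_
  funext k
  show (Fin.cons x (Fin.cons y rest) : Fin (c+2) → Fin (c+2) → ℝ) 0 k
      = (Fin.cons x (Fin.cons y rest) : Fin (c+2) → Fin (c+2) → ℝ) l.succ.succ k
  rw [Fin.cons_zero, Fin.cons_succ, Fin.cons_succ, h]

lemma detB_eq_zero_right (rest : Fin c → Fin (c+2) → ℝ) (x y : Fin (c+2) → ℝ)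
    (l : Fin c) (h : rest l = y) : detB rest x y = 0 := by
  have := detB_eq_zero_left rest y x l h
  have h2 := detB_swap rest y x
  rw [this] at h2
  linarith [detB_swap rest x y]

lemma detB_expand (rest : Fin c → Fin (c+2) → ℝ) (x y : Fin (c+2) → ℝ) :
    detB rest x y = ∑ i : Fin (c+2), ∑ j : Fin (c+2), x i * y j * detB rest (bE i) (bE j) := by
  have hs1 : ∀ (z : Fin (c+2) → ℝ) (P : Fin (c+1) → Fin (c+2) → ℝ),
      (Fin.cons z P : Fin (c+2) → Fin (c+2) → ℝ)
        = Function.update (Fin.cons (0 : Fin (c+2) → ℝ) P : Fin (c+2) → Fin (c+2) → ℝ) 0 z :=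
    fun z P => by rw [Fin.update_cons_zero]
  have hs2 : ∀ (u z : Fin (c+2) → ℝ) (P : Fin c → Fin (c+2) → ℝ),
      (Fin.cons u (Fin.cons z P) : Fin (c+2) → Fin (c+2) → ℝ)
        = Function.update (Fin.cons u (Fin.cons (0 : Fin (c+2) → ℝ) P) : Fin (c+2) → Fin (c+2) → ℝ) (Fin.succ 0) z := by
    intro u z P
    rw [← Fin.cons_update, Fin.update_cons_zero]
  have key1 : ∀ (u : Fin (c+2) → ℝ),
      detB rest u y = ∑ j : Fin (c+2), y j * detB rest u (bE j) := by
    intro u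
    show Matrix.detRowAlternating (Fin.cons u (Fin.cons y rest)) = _
    rw [hs2 u y rest]
    conv_lhs => rw [pi_sum_bE y]
    rw [AlternatingMap.map_update_sum Matrix.detRowAlternating univ
      (Fin.succ 0) (fun j => y j • bE j) _]
    refine Finset.sum_congr rfl (fun j _ => ?_)
    rw [AlternatingMap.map_update_smul, ← hs2 u (bE j) rest]
    rfl
  show Matrix.detRowAlternating (Fin.cons x (Fin.cons y rest)) = _
  rw [hs1 x (Fin.cons y rest)]
  conv_lhs => rw [pi_sum_bE x]
  rw [AlternatingMap.map_update_sum Matrix.detRowAlternating univ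
    0 (fun i => x i • bE i) _]
  refine Finset.sum_congr rfl (fun i _ => ?_)
  rw [AlternatingMap.map_update_smul, ← hs1 (bE i) (Fin.cons y rest)]
  have : Matrix.detRowAlternating (Fin.cons (bE i) (Fin.cons y rest)) = detB rest (bE i) y := rfl
  rw [smul_eq_mul, this, key1 (bE i), Finset.mul_sum]
  exact Finset.sum_congr rfl (fun j _ => by ring)

lemma detB_pair_sum (rest : Fin c → Fin (c+2) → ℝ) (x y : Fin (c+2) → ℝ) :
    ∑ pr : Fin (c+2) × Fin (c+2),
        (x pr.1 * y pr.2 - x pr.2 * y pr.1) * detB rest (bE pr.1) (bE pr.2)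
      = 2 * detB rest x y := by
  rw [Fintype.sum_prod_type]
  calc ∑ i : Fin (c+2), ∑ j : Fin (c+2),
          (x i * y j - x j * y i) * detB rest (bE i) (bE j)
      = (∑ i : Fin (c+2), ∑ j : Fin (c+2), x i * y j * detB rest (bE i) (bE j))
        - ∑ i : Fin (c+2), ∑ j : Fin (c+2), x j * y i * detB rest (bE i) (bE j) := by
        rw [← Finset.sum_sub_distrib]
        refine Finset.sum_congr rfl (fun i _ => ?_)
        rw [← Finset.sum_sub_distrib]
        exact Finset.sum_congr rfl (fun j _ => by ring)
    _ = detB rest x y - ∑ j : Fin (c+2), ∑ i : Fin (c+2), x j * y i * detB rest (bE i) (bE j) := by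
        rw [← detB_expand, Finset.sum_comm]
    _ = detB rest x y - ∑ j : Fin (c+2), ∑ i : Fin (c+2), x j * y i * -detB rest (bE j) (bE i) := by
        congr 1
        refine Finset.sum_congr rfl (fun j _ => ?_)
        refine Finset.sum_congr rfl (fun i _ => ?_)
        rw [detB_swap rest (bE j) (bE i)]
    _ = 2 * detB rest x y := by
        have h2 : ∑ j : Fin (c+2), ∑ i : Fin (c+2), x j * y i * -detB rest (bE j) (bE i)
            = - ∑ j : Fin (c+2), ∑ i : Fin (c+2), x j * y i * detB rest (bE j) (bE i) := by
          rw [← Finset.sum_neg_distrib]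
          refine Finset.sum_congr rfl (fun j _ => ?_)
          rw [← Finset.sum_neg_distrib]
          exact Finset.sum_congr rfl (fun i _ => by ring)
        rw [h2, ← detB_expand]
        ring

lemma detB_vandermonde_ne (u : Fin (c+2) → ℝ) (hu : Function.Injective u) :
    detB (fun l j => u l.succ.succ ^ (j : ℕ)) (fun j => u 0 ^ (j : ℕ)) (fun j => u 1 ^ (j : ℕ)) ≠ 0 := by
  have hmat : Matrix.of (Fin.cons (fun j => u 0 ^ (j : ℕ))
      (Fin.cons (fun j => u 1 ^ (j : ℕ)) (fun l j => u l.succ.succ ^ (j : ℕ)))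
        : Fin (c+2) → Fin (c+2) → ℝ) = Matrix.vandermonde u := by
    ext i j
    refine Fin.cases ?_ (fun a => ?_) i
    · simp [Matrix.vandermonde_apply]
    · refine Fin.cases ?_ (fun b => ?_) a
      · show (Fin.cons (fun j => u 0 ^ (j : ℕ))
          (Fin.cons (fun j => u 1 ^ (j : ℕ)) (fun l j => u l.succ.succ ^ (j : ℕ)))
            : Fin (c+2) → Fin (c+2) → ℝ) (Fin.succ 0) j = _
        rw [Fin.cons_succ, Fin.cons_zero, Matrix.vandermonde_apply, Fin.succ_zero_eq_one]
      · show (Fin.cons (fun j => u 0 ^ (j : ℕ))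
          (Fin.cons (fun j => u 1 ^ (j : ℕ)) (fun l j => u l.succ.succ ^ (j : ℕ)))
            : Fin (c+2) → Fin (c+2) → ℝ) b.succ.succ j = _
        rw [Fin.cons_succ, Fin.cons_succ, Matrix.vandermonde_apply]
  unfold detB
  rw [hmat]
  exact Matrix.det_vandermonde_ne_zero_iff.mpr hu

end Det

lemma card_pairs (d : ℕ) :
    Fintype.card {pr : Fin d × Fin d // pr.1 < pr.2} = d.choose 2 := by
  classical
  rw [Fintype.card_subtype]
  set L := univ.filter (fun pr : Fin d × Fin d => pr.1 < pr.2) with hL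
  set G := univ.filter (fun pr : Fin d × Fin d => pr.2 < pr.1) with hG
  have hcardeq : L.card = G.card := by
    apply Finset.card_bij' (fun pr _ => pr.swap) (fun pr _ => pr.swap)
    · intro a _; exact Prod.swap_swap a
    · intro a _; exact Prod.swap_swap a
    · intro a ha
      simp only [hL, hG, mem_filter, mem_univ, true_and, Prod.fst_swap, Prod.snd_swap] at ha ⊢
      exact ha
    · intro a ha
      simp only [hL, hG, mem_filter, mem_univ, true_and, Prod.fst_swap, Prod.snd_swap] at ha ⊢
      exact ha
  have hunion : L ∪ G = (univ : Finset (Fin d × Fin d)).filter (fun pr => pr.1 ≠ pr.2) := by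
    ext pr
    simp only [hL, hG, mem_union, mem_filter, mem_univ, true_and]
    constructor
    · rintro (h | h)
      · exact ne_of_lt h
      · exact ne_of_gt h
    · intro h; exact lt_or_gt_of_ne h
  have hdisj : Disjoint L G := by
    rw [Finset.disjoint_left]
    intro pr h1 h2
    simp only [hL, hG, mem_filter] at h1 h2
    exact absurd (h1.2.trans h2.2) (lt_irrefl _)
  have hoff : (univ : Finset (Fin d × Fin d)).filter (fun pr => pr.1 ≠ pr.2)
      = (univ : Finset (Fin d)).offDiag := by
    ext pr; simp [Finset.mem_offDiag]
  have hcardunion : L.card + G.card = d * d - d := by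
    rw [← Finset.card_union_of_disjoint hdisj, hunion, hoff, Finset.offDiag_card,
      Finset.card_univ, Fintype.card_fin]
  have hmul : d * d - d = d * (d - 1) := by
    cases d with
    | zero => simp
    | succ e => exact Nat.sub_eq_of_eq_add (by rw [Nat.add_sub_cancel]; ring)
  have hX : L.card * 2 = d * (d - 1) := by
    rw [← hmul, ← hcardunion, hcardeq]; ring
  rw [Nat.choose_two_right, ← hX, Nat.mul_div_cancel _ (by norm_num)]


lemma frankl {Q : Type*} [Fintype Q] [DecidableEq Q] {k m : ℕ}
    (M : Fin m → Finset Q) (p q : Fin m → Q)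
    (hcard : ∀ t, (M t).card = k)
    (hp : ∀ t, p t ∈ M t) (hq : ∀ t, q t ∈ M t) (hne : ∀ t, p t ≠ q t)
    (hskew : ∀ i j : Fin m, i < j → p j ∉ M i ∨ q j ∉ M i) :
    m ≤ (Fintype.card Q - k + 2).choose 2 := by
  classical
  set c := Fintype.card Q - k with hc
  have hcompl : ∀ t, (univ \ M t).card = c := fun t => by
    rw [Finset.card_sdiff_of_subset (Finset.subset_univ _), Finset.card_univ, hcard]
  let ce : ∀ _t : Fin m, _ := fun t => Finset.equivFinOfCardEq (hcompl t)
  let es : Fin m → Fin c → Q := fun t l => ((ce t).symm l : Q)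
  have hes_mem : ∀ t l, es t l ∈ univ \ M t := fun t l => ((ce t).symm l).2
  have hes_notin : ∀ t l, es t l ∉ M t := fun t l => (Finset.mem_sdiff.mp (hes_mem t l)).2
  have hes_inj : ∀ t, Function.Injective (es t) := fun t a b h =>
    (ce t).symm.injective (Subtype.coe_injective h)
  have hes_surj : ∀ t x, x ∉ M t → ∃ l, es t l = x := by
    intro t x hx
    refine ⟨ce t ⟨x, Finset.mem_sdiff.mpr ⟨Finset.mem_univ x, hx⟩⟩, ?_⟩
    simp [es]
  let r : Q → ℝ := fun x => ((Fintype.equivFin Q x : ℕ) : ℝ)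
  have hr : Function.Injective r := by
    intro a b h
    exact (Fintype.equivFin Q).injective (Fin.val_injective (Nat.cast_injective h))
  let v : Q → Fin (c+2) → ℝ := fun x j => r x ^ (j : ℕ)
  let g : Fin m → Fin c → Fin (c+2) → ℝ := fun s l => v (es s l)
  let F : Fin m → Fin m → ℝ := fun t s => detB (g s) (v (p t)) (v (q t))
  have hFdiag : ∀ t, F t t ≠ 0 := by
    intro t
    set elts : Fin (c+2) → Q := Fin.cons (p t) (Fin.cons (q t) (es t)) with helts_def
    have hps : ∀ l, p t ≠ es t l := fun l h => hes_notin t l (h ▸ hp t)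
    have hqs : ∀ l, q t ≠ es t l := fun l h => hes_notin t l (h ▸ hq t)
    have helts : Function.Injective elts := by
      intro a b
      refine Fin.cases ?_ (fun a' => ?_) a <;> [skip; refine Fin.cases ?_ (fun a'' => ?_) a'] <;>
        (refine Fin.cases ?_ (fun b' => ?_) b <;> [skip; refine Fin.cases ?_ (fun b'' => ?_) b']) <;>
        simp only [helts_def, Fin.cons_zero, Fin.cons_succ] <;> intro h
      · trivial
      · exact absurd h (hne t)
      · exact absurd h (hps b'')
      · exact absurd h.symm (hne t)
      · trivial
      · exact absurd h (hqs b'')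
      · exact absurd h.symm (hps a'')
      · exact absurd h.symm (hqs a'')
      · rw [hes_inj t h]
    have hv := detB_vandermonde_ne (r ∘ elts) (hr.comp helts)
    have e1 : (fun l (j : Fin (c+2)) => (r ∘ elts) l.succ.succ ^ (j : ℕ)) = g t := by
      funext l j
      simp [helts_def, Fin.cons_succ, g, v]
    have e2 : (fun (j : Fin (c+2)) => (r ∘ elts) 0 ^ (j : ℕ)) = v (p t) := by
      funext j
      simp [helts_def, v]
    have e3 : (fun (j : Fin (c+2)) => (r ∘ elts) 1 ^ (j : ℕ)) = v (q t) := by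
      funext j
      rw [show ((1 : Fin (c+2))) = Fin.succ 0 from (Fin.succ_zero_eq_one).symm]
      simp [helts_def, Fin.cons_succ, v]
    rw [e1, e2, e3] at hv
    exact hv
  have hFskew : ∀ t s : Fin m, s < t → F t s = 0 := by
    intro t s hst
    rcases hskew s t hst with h | h
    · obtain ⟨l, hl⟩ := hes_surj s (p t) h
      exact detB_eq_zero_left (g s) _ _ l (by simp [g, hl])
    · obtain ⟨l, hl⟩ := hes_surj s (q t) h
      exact detB_eq_zero_right (g s) _ _ l (by simp [g, hl])
  let W : Fin m → (Fin (c+2) × Fin (c+2) → ℝ) := fun t pr =>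
    v (p t) pr.1 * v (q t) pr.2 - v (p t) pr.2 * v (q t) pr.1
  let Wr : Fin m → ({pr : Fin (c+2) × Fin (c+2) // pr.1 < pr.2} → ℝ) := fun t z => W t z.1
  have hli : LinearIndependent ℝ Wr := by
    rw [Fintype.linearIndependent_iff]
    intro gg hgg
    have hfull : ∀ pr : Fin (c+2) × Fin (c+2), ∑ t, gg t * W t pr = 0 := by
      intro pr
      rcases lt_trichotomy pr.1 pr.2 with h | h | h
      · have := congrFun hgg ⟨pr, h⟩
        simpa [Wr, Finset.sum_apply, Pi.smul_apply, smul_eq_mul] using this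
      · have hW : ∀ t, W t pr = 0 := fun t => by simp [W, h]
        simp [hW]
      · have h0 := congrFun hgg ⟨(pr.2, pr.1), h⟩
        have h0' : ∑ t, gg t * W t (pr.2, pr.1) = 0 := by
          simpa [Wr, Finset.sum_apply, Pi.smul_apply, smul_eq_mul] using h0
        have h2 : ∑ t, gg t * W t pr = - ∑ t, gg t * W t (pr.2, pr.1) := by
          rw [← Finset.sum_neg_distrib]
          refine Finset.sum_congr rfl (fun t _ => ?_)
          simp only [W]
          ring
        rw [h2, h0', neg_zero]
    by_contra hex
    push_neg at hex
    obtain ⟨t1, ht1⟩ := hex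
    have hne' : (univ.filter (fun t => gg t ≠ 0)).Nonempty := ⟨t1, by simp [ht1]⟩
    set t0 := (univ.filter (fun t => gg t ≠ 0)).min' hne' with ht0
    have ht0mem : gg t0 ≠ 0 := by
      have := Finset.min'_mem _ hne'
      rw [Finset.mem_filter] at this
      exact this.2
    have hbelow : ∀ s, s < t0 → gg s = 0 := by
      intro s hs
      by_contra h
      have : t0 ≤ s := Finset.min'_le _ _ (by simp [h])
      exact absurd (lt_of_le_of_lt this hs) (lt_irrefl _)
    have key : ∑ t, gg t * (∑ pr : Fin (c+2) × Fin (c+2),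
        W t pr * detB (g t0) (bE pr.1) (bE pr.2)) = 0 := by
      calc ∑ t, gg t * (∑ pr : Fin (c+2) × Fin (c+2), W t pr * detB (g t0) (bE pr.1) (bE pr.2))
          = ∑ t, ∑ pr : Fin (c+2) × Fin (c+2), gg t * W t pr * detB (g t0) (bE pr.1) (bE pr.2) := by
            refine Finset.sum_congr rfl (fun t _ => ?_)
            rw [Finset.mul_sum]
            exact Finset.sum_congr rfl (fun pr _ => by ring)
        _ = ∑ pr : Fin (c+2) × Fin (c+2), ∑ t, gg t * W t pr * detB (g t0) (bE pr.1) (bE pr.2) :=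
            Finset.sum_comm
        _ = ∑ pr : Fin (c+2) × Fin (c+2), (∑ t, gg t * W t pr) * detB (g t0) (bE pr.1) (bE pr.2) := by
            refine Finset.sum_congr rfl (fun pr _ => ?_)
            rw [Finset.sum_mul]
        _ = 0 := by
            refine Finset.sum_eq_zero (fun pr _ => ?_)
            rw [hfull pr, zero_mul]
    have hinner : ∀ t, (∑ pr : Fin (c+2) × Fin (c+2),
        W t pr * detB (g t0) (bE pr.1) (bE pr.2)) = 2 * F t t0 := fun t =>
      detB_pair_sum (g t0) (v (p t)) (v (q t))
    rw [Finset.sum_congr rfl (fun t _ => by rw [hinner t])] at key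
    have hsingle : ∑ t, gg t * (2 * F t t0) = gg t0 * (2 * F t0 t0) := by
      refine Finset.sum_eq_single t0 (fun t _ ht => ?_) (fun h => absurd (Finset.mem_univ t0) h)
      rcases lt_or_gt_of_ne ht with h | h
      · rw [hbelow t h, zero_mul]
      · rw [hFskew t t0 h, mul_zero, mul_zero]
    rw [hsingle] at key
    rcases mul_eq_zero.mp key with h | h
    · exact ht0mem h
    · rcases mul_eq_zero.mp h with h' | h'
      · norm_num at h'
      · exact hFdiag t0 h'
  have hcardle := hli.fintype_card_le_finrank
  rw [Module.finrank_fintype_fun_eq_card, Fintype.card_fin, card_pairs] at hcardle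
  exact hcardle



section Auto
variable {Q A : Type*} [Fintype Q] [DecidableEq Q]

def imgS (δ : Q → A → Q) (S : Finset Q) (w : List A) : Finset Q :=
  S.image (fun q => actW δ q w)

lemma actW_append (δ : Q → A → Q) (q : Q) (u v : List A) :
    actW δ q (u ++ v) = actW δ (actW δ q u) v :=
  List.foldl_append

lemma imgS_nil (δ : Q → A → Q) (S : Finset Q) : imgS δ S [] = S := by
  simp [imgS, actW]

lemma imgS_append (δ : Q → A → Q) (S : Finset Q) (u v : List A) :
    imgS δ S (u ++ v) = imgS δ (imgS δ S u) v := by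
  simp only [imgS, Finset.image_image]
  exact Finset.image_congr (fun q _ => actW_append δ q u v)

lemma mem_imgS {δ : Q → A → Q} {S : Finset Q} {w : List A} {q : Q} (h : q ∈ S) :
    actW δ q w ∈ imgS δ S w := Finset.mem_image_of_mem _ h

lemma card_image_lt_of_eq {B : Type*} [DecidableEq B] {T : Finset Q} {f : Q → B}
    {x y : Q} (hx : x ∈ T) (hy : y ∈ T) (hxy : x ≠ y) (hf : f x = f y) :
    (T.image f).card < T.card := by
  have hsub : T.image f ⊆ (T.erase x).image f := by
    intro z hz
    obtain ⟨t, ht, rfl⟩ := Finset.mem_image.mp hz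
    by_cases h : t = x
    · subst h
      exact Finset.mem_image.mpr ⟨y, Finset.mem_erase.mpr ⟨hxy.symm, hy⟩, hf.symm⟩
    · exact Finset.mem_image.mpr ⟨t, Finset.mem_erase.mpr ⟨h, ht⟩, rfl⟩
  calc (T.image f).card ≤ ((T.erase x).image f).card := Finset.card_le_card hsub
    _ ≤ (T.erase x).card := Finset.card_image_le
    _ < T.card := Finset.card_erase_lt_of_mem hx

lemma collapse_step (δ : Q → A → Q) (hsync : ∃ w : List A, (img δ w).card = 1)
    {S : Finset Q} (hS2 : 2 ≤ S.card) :
    ∃ w : List A, (imgS δ S w).card < S.card ∧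
      w.length ≤ (Fintype.card Q - S.card + 2).choose 2 := by
  classical
  obtain ⟨w₀, hw₀⟩ := hsync
  have hex : ∃ mw : ℕ, ∃ w : List A, w.length = mw ∧ (imgS δ S w).card < S.card := by
    refine ⟨w₀.length, w₀, rfl, ?_⟩
    have hsub : imgS δ S w₀ ⊆ img δ w₀ := Finset.image_subset_image (Finset.subset_univ S)
    calc (imgS δ S w₀).card ≤ (img δ w₀).card := Finset.card_le_card hsub
      _ = 1 := hw₀
      _ < S.card := hS2
  set m := Nat.find hex with hm
  obtain ⟨w, hwlen, hwcol⟩ := Nat.find_spec hex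
  have hmin : ∀ (u : List A), u.length < m → ¬ ((imgS δ S u).card < S.card) :=
    fun u hu hcu => Nat.find_min hex hu ⟨u, rfl, hcu⟩
  rw [← hm] at hwlen
  have hm1 : 1 ≤ m := by
    by_contra h0
    have hw0 : w.length = 0 := by omega
    rw [List.length_eq_zero_iff.mp hw0, imgS_nil] at hwcol
    exact absurd hwcol (lt_irrefl _)
  -- the sets S_i
  have hScard : ∀ i, i < m → (imgS δ S (w.take i)).card = S.card := by
    intro i hi
    have hle : (imgS δ S (w.take i)).card ≤ S.card := Finset.card_image_le
    have hlen : (w.take i).length < m := by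
      rw [List.length_take, hwlen]
      omega
    have := hmin _ hlen
    omega
  -- collision at the last step
  have hsplit : w = w.take (m-1) ++ w.drop (m-1) := (List.take_append_drop _ w).symm
  have hcolfin : (imgS δ (imgS δ S (w.take (m-1))) (w.drop (m-1))).card < S.card := by
    rw [← imgS_append, ← hsplit]
    exact hwcol
  obtain ⟨a, ha, b, hb, hab, habeq⟩ :
      ∃ a ∈ imgS δ S (w.take (m-1)), ∃ b ∈ imgS δ S (w.take (m-1)), a ≠ b ∧
        actW δ a (w.drop (m-1)) = actW δ b (w.drop (m-1)) := by
    by_contra hcon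
    push_neg at hcon
    have hinj : Set.InjOn (fun q => actW δ q (w.drop (m-1))) (imgS δ S (w.take (m-1))) := by
      intro x hx y hy hxy
      by_contra hne
      exact absurd hxy (hcon x hx y hy hne)
    have := Finset.card_image_of_injOn hinj
    rw [show ((imgS δ S (w.take (m-1))).image (fun q => actW δ q (w.drop (m-1))))
        = imgS δ (imgS δ S (w.take (m-1))) (w.drop (m-1)) from rfl, hScard (m-1) (by omega)] at this
    omega
  obtain ⟨p₀, hp₀S, hp₀⟩ := Finset.mem_image.mp ha
  obtain ⟨q₀, hq₀S, hq₀⟩ := Finset.mem_image.mp hb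
  -- trajectories
  set pi : ℕ → Q := fun i => actW δ p₀ (w.take i) with hpi
  set qi : ℕ → Q := fun i => actW δ q₀ (w.take i) with hqi
  have hfinal : actW δ p₀ w = actW δ q₀ w := by
    conv_lhs => rw [hsplit]
    conv_rhs => rw [hsplit]
    rw [actW_append, actW_append, hp₀, hq₀, habeq]
  have hpq_ne : ∀ i, i ≤ m - 1 → pi i ≠ qi i := by
    intro i hi h
    apply hab
    have h1 : w.take (m-1) = w.take i ++ (w.take (m-1)).drop i := by
      conv_lhs => rw [← List.take_append_drop i (w.take (m-1))]
      rw [List.take_take, min_eq_left hi]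
    rw [← hp₀, ← hq₀, h1, actW_append, actW_append]
    rw [show actW δ p₀ (w.take i) = pi i from rfl, show actW δ q₀ (w.take i) = qi i from rfl, h]
  have hskew : ∀ i j : ℕ, i < j → j ≤ m - 1 →
      ¬(pi j ∈ imgS δ S (w.take i) ∧ qi j ∈ imgS δ S (w.take i)) := by
    rintro i j hij hj ⟨hpj, hqj⟩
    set u := w.take i ++ w.drop j with hu
    have hulen : u.length < m := by
      rw [hu, List.length_append, List.length_take, List.length_drop, hwlen]
      omega
    apply hmin u hulen
    rw [hu, imgS_append]
    have himg : ∀ z₀ : Q, actW δ (actW δ z₀ (w.take j)) (w.drop j) = actW δ z₀ w := by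
      intro z₀
      rw [← actW_append, List.take_append_drop]
    have heq : actW δ (pi j) (w.drop j) = actW δ (qi j) (w.drop j) := by
      rw [hpi, hqi]
      simp only []
      rw [himg p₀, himg q₀, hfinal]
    calc (imgS δ (imgS δ S (w.take i)) (w.drop j)).card
        < (imgS δ S (w.take i)).card :=
          card_image_lt_of_eq hpj hqj (hpq_ne j hj) heq
      _ = S.card := hScard i (by omega)
  -- apply frankl
  have hmle : m ≤ (Fintype.card Q - S.card + 2).choose 2 := by
    apply frankl (m := m) (fun t : Fin m => imgS δ S (w.take t.val))
      (fun t => pi t.val) (fun t => qi t.val)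
    · exact fun t => hScard t.val t.isLt
    · exact fun t => mem_imgS hp₀S
    · exact fun t => mem_imgS hq₀S
    · exact fun t => hpq_ne t.val (by omega)
    · intro i j hij
      have := hskew i.val j.val hij (by omega)
      tauto
  exact ⟨w, hwcol, by omega⟩


lemma reset_aux (δ : Q → A → Q) (hsync : ∃ w : List A, (img δ w).card = 1) :
    ∀ (N : ℕ) (S : Finset Q), S.card ≤ N → S.Nonempty →
      ∃ w : List A, (imgS δ S w).card = 1 ∧
        w.length ≤ ∑ j ∈ Finset.range (S.card + 1),
          (if 2 ≤ j then (Fintype.card Q - j + 2).choose 2 else 0) := by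
  intro N
  induction N with
  | zero => intro S hc hne; exact absurd (Finset.card_pos.mpr hne) (by omega)
  | succ N ih =>
    intro S hc hne
    by_cases h1 : S.card ≤ 1
    · refine ⟨[], ?_, Nat.zero_le _⟩
      rw [imgS_nil]
      exact le_antisymm h1 (Finset.card_pos.mpr hne)
    · push_neg at h1
      obtain ⟨w₁, hw₁col, hw₁len⟩ := collapse_step δ hsync (show 2 ≤ S.card by omega)
      set S' := imgS δ S w₁ with hS'
      have hS'ne : S'.Nonempty := hne.image _
      have hS'lt : S'.card < S.card := hw₁col
      obtain ⟨w₂, hw₂col, hw₂len⟩ := ih S' (by omega) hS'ne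
      refine ⟨w₁ ++ w₂, ?_, ?_⟩
      · rw [imgS_append, ← hS']
        exact hw₂col
      · rw [List.length_append]
        have hmono : ∑ j ∈ Finset.range (S'.card + 1),
              (if 2 ≤ j then (Fintype.card Q - j + 2).choose 2 else 0)
            ≤ ∑ j ∈ Finset.range (S.card - 1 + 1),
              (if 2 ≤ j then (Fintype.card Q - j + 2).choose 2 else 0) :=
          Finset.sum_le_sum_of_subset (Finset.range_subset_range.mpr (by omega))
        have hstep : ∑ j ∈ Finset.range (S.card + 1),
              (if 2 ≤ j then (Fintype.card Q - j + 2).choose 2 else 0)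
            = ∑ j ∈ Finset.range (S.card - 1 + 1),
              (if 2 ≤ j then (Fintype.card Q - j + 2).choose 2 else 0)
              + (Fintype.card Q - S.card + 2).choose 2 := by
          rw [show S.card + 1 = (S.card - 1 + 1) + 1 by omega, Finset.sum_range_succ,
            show S.card - 1 + 1 = S.card by omega, if_pos (show 2 ≤ S.card by omega)]
        omega

theorem pin_cubic_bound_aux (δ : Q → A → Q)
    (hsync : ∃ w : List A, (img δ w).card = 1) :
    ∃ w : List A, (img δ w).card = 1 ∧
      w.length ≤ (Fintype.card Q ^ 3 - Fintype.card Q) / 6 := by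
  classical
  obtain ⟨w₀, hw₀⟩ := hsync
  have himgne : (img δ w₀).Nonempty := Finset.card_pos.mp (by rw [hw₀]; norm_num)
  have hQne : (univ : Finset Q).Nonempty := by
    obtain ⟨x, _⟩ := himgne
    exact ⟨x, Finset.mem_univ x⟩
  obtain ⟨w, hwcol, hwlen⟩ := reset_aux δ ⟨w₀, hw₀⟩ (Fintype.card Q) univ
    (le_of_eq (Finset.card_univ)) hQne
  refine ⟨w, hwcol, le_trans hwlen ?_⟩
  set n := Fintype.card Q with hn
  rw [Finset.card_univ, ← hn]
  have h1 : ∑ j ∈ Finset.range (n+1), (if 2 ≤ j then (n - j + 2).choose 2 else 0)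
      = ∑ j ∈ Finset.Icc 2 n, (n - j + 2).choose 2 := by
    rw [← Finset.sum_filter]
    congr 1
    ext j
    simp only [Finset.mem_filter, Finset.mem_range, Finset.mem_Icc]
    omega
  have h2 : ∑ j ∈ Finset.Icc 2 n, (n - j + 2).choose 2 = ∑ i ∈ Finset.Icc 2 n, i.choose 2 := by
    refine Finset.sum_nbij' (i := fun j => n + 2 - j) (j := fun i => n + 2 - i) ?_ ?_ ?_ ?_ ?_
    · intro a ha; rw [Finset.mem_Icc] at ha ⊢; omega
    · intro a ha; rw [Finset.mem_Icc] at ha ⊢; omega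
    · intro a ha; rw [Finset.mem_Icc] at ha; omega
    · intro a ha; rw [Finset.mem_Icc] at ha; omega
    · intro a ha
      rw [Finset.mem_Icc] at ha
      congr 1
      omega
  have h3 : ∑ i ∈ Finset.Icc 2 n, i.choose 2 = (n+1).choose 3 := Nat.sum_Icc_choose n 2
  have h4 : (n+1).choose 3 = (n^3 - n)/6 := by
    rw [Nat.choose_eq_descFactorial_div_factorial]
    have hd : (n+1).descFactorial 3 = n^3 - n := by
      cases n with
      | zero => simp [Nat.descFactorial]
      | succ e =>
        rw [Nat.descFactorial_succ, Nat.descFactorial_succ, Nat.descFactorial_succ,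
          Nat.descFactorial_zero]
        rw [show e + 1 + 1 - 2 = e by omega, show e + 1 + 1 - 1 = e + 1 by omega,
          show e + 1 + 1 - 0 = e + 2 by omega]
        refine (Nat.sub_eq_of_eq_add ?_).symm
        ring
    rw [hd]
    norm_num [Nat.factorial]
  omega

end Auto


/-- Pin's cubic bound: every synchronizing DFA with n states has a reset word of
length at most (n^3 - n)/6. -/
theorem pin_cubic_bound {Q A : Type*} [Fintype Q] [DecidableEq Q] (δ : Q → A → Q)
    (hsync : ∃ w : List A, (img δ w).card = 1) :
    ∃ w : List A, (img δ w).card = 1 ∧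
      w.length ≤ (Fintype.card Q ^ 3 - Fintype.card Q) / 6 :=
  pin_cubic_bound_aux δ hsync
end

section
/- The maximal length of an m-subset Frankl–Pin sequence in a set Q with |Q| = n is at most C(n - m + 2, 2). -/
open Finset Polynomial

namespace FranklPinAux

/-- antisymmetric monomials -/
noncomputable def easym (k l : ℕ) : ℝ × ℝ → ℝ :=
  fun p => p.1 ^ k * p.2 ^ l - p.1 ^ l * p.2 ^ k

/-- the set of index pairs -/
def pairSet (d : ℕ) : Finset (ℕ × ℕ) :=
  ((range d) ×ˢ (range d)).filter (fun p => p.1 < p.2)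

lemma card_pairSet (d : ℕ) : (pairSet d).card = d.choose 2 := by
  have h : pairSet d = (range d).biUnion
      (fun l => (range l).image fun k => (k, l)) := by
    ext ⟨k, l⟩
    simp only [pairSet, mem_filter, mem_product, mem_range, mem_biUnion, mem_image,
      Prod.mk.injEq]
    constructor
    · rintro ⟨⟨hk, hl⟩, hlt⟩
      exact ⟨l, hl, k, hlt, rfl, rfl⟩
    · rintro ⟨l', hl', k', hk', rfl, rfl⟩
      exact ⟨⟨hk'.trans hl', hl'⟩, hk'⟩
  rw [h, card_biUnion]
  · have : ∀ l ∈ range d, ((range l).image fun k => (k, l)).card = l := by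
      intro l _
      rw [Finset.card_image_of_injective _ (fun a b hab => (Prod.ext_iff.1 hab).1),
        Finset.card_range]
    rw [Finset.sum_congr rfl this, Finset.sum_range_id, Nat.choose_two_right]
  · intro a _ b _ hab
    simp only [Finset.disjoint_left, mem_image, mem_range]
    rintro ⟨k, l⟩ ⟨k₁, hk₁, h1⟩ ⟨k₂, hk₂, h2⟩
    exact hab ((Prod.ext_iff.1 h1).2.trans (Prod.ext_iff.1 h2).2.symm)

/-- the span of antisymmetric monomials with both exponents less than d -/
noncomputable def S (d : ℕ) : Submodule ℝ (ℝ × ℝ → ℝ) :=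
  Submodule.span ℝ ((fun p : ℕ × ℕ => easym p.1 p.2) '' ↑(pairSet d))

lemma mem_pairSet {d k l : ℕ} (hk : l < d) (hkl : k < l) : (k, l) ∈ pairSet d :=
  Finset.mem_filter.2 ⟨Finset.mem_product.2 ⟨Finset.mem_range.2 (hkl.trans hk),
    Finset.mem_range.2 hk⟩, hkl⟩

lemma easym_mem {d k l : ℕ} (hk : k < d) (hl : l < d) : easym k l ∈ S d := by
  rcases lt_trichotomy k l with h | h | h
  · exact Submodule.subset_span ⟨(k, l), mem_pairSet hl h, rfl⟩
  · have : easym k l = 0 := by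
      subst h; funext p; simp [easym]
    rw [this]; exact Submodule.zero_mem _
  · have hmem : easym l k ∈ S d := Submodule.subset_span ⟨(l, k), mem_pairSet hk h, rfl⟩
    have : easym k l = (-1 : ℝ) • easym l k := by
      funext p
      simp only [easym, Pi.smul_apply, smul_eq_mul]
      ring
    rw [this]
    exact Submodule.smul_mem _ _ hmem

lemma finrank_S_le (d : ℕ) : Module.finrank ℝ (S d) ≤ d.choose 2 := by
  classical
  have heq : (fun p : ℕ × ℕ => easym p.1 p.2) '' ↑(pairSet d) =
      ↑((pairSet d).image fun p => easym p.1 p.2) := by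
    simp [Finset.coe_image]
  have h1 : Module.finrank ℝ (S d) ≤ ((pairSet d).image fun p => easym p.1 p.2).card := by
    have hS : S d = Submodule.span ℝ ↑((pairSet d).image fun p => easym p.1 p.2) := by
      rw [S, heq]
    rw [hS]
    have := finrank_span_finset_le_card (R := ℝ) ((pairSet d).image fun p => easym p.1 p.2)
    simpa [Set.finrank] using this
  exact h1.trans ((Finset.card_image_le).trans (card_pairSet d).le)

lemma pair_fun_mem {d : ℕ} (a b : Polynomial ℝ) (ha : a.natDegree < d) (hb : b.natDegree < d) :
    (fun p : ℝ × ℝ => a.eval p.1 * b.eval p.2 - a.eval p.2 * b.eval p.1) ∈ S d := by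
  have hfun : (fun p : ℝ × ℝ => a.eval p.1 * b.eval p.2 - a.eval p.2 * b.eval p.1) =
      ∑ k ∈ range d, ∑ l ∈ range d, (a.coeff k * b.coeff l) • easym k l := by
    funext p
    have hau := Polynomial.eval_eq_sum_range' ha p.1
    have haw := Polynomial.eval_eq_sum_range' ha p.2
    have hbu := Polynomial.eval_eq_sum_range' hb p.1
    have hbw := Polynomial.eval_eq_sum_range' hb p.2
    simp only [Finset.sum_apply, Pi.smul_apply, smul_eq_mul, easym]
    rw [hau, haw, hbu, hbw]
    rw [Finset.sum_mul_sum, Finset.sum_mul_sum]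
    rw [← Finset.sum_sub_distrib]
    congr 1
    funext k
    rw [← Finset.sum_sub_distrib]
    congr 1
    funext l
    ring
  rw [hfun]
  apply Submodule.sum_mem
  intro k hk
  apply Submodule.sum_mem
  intro l hl
  exact Submodule.smul_mem _ _ (easym_mem (mem_range.1 hk) (mem_range.1 hl))

end FranklPinAux

open FranklPinAux in
/-- The Frankl–Pin bound: an m-subset Frankl–Pin sequence in an n-set has
length at most C(n-m+2, 2). -/
theorem franklPin_seq_length {Q : Type*} [Fintype Q] [DecidableEq Q]
    (n m ℓ : ℕ) (hn : Fintype.card Q = n) (hm2 : 2 ≤ m) (hmn : m ≤ n)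
    (M : Fin ℓ → Finset Q) (x y : Fin ℓ → Q)
    (hcard : ∀ i, (M i).card = m)
    (hmem : ∀ i, x i ∈ M i ∧ y i ∈ M i)
    (hne : ∀ i, x i ≠ y i)
    (hfp : ∀ i j, j < i → x i ∉ M j ∨ y i ∉ M j) :
    ℓ ≤ Nat.choose (n - m + 2) 2 := by
  classical
  -- an injective embedding of Q into ℝ
  set t : Q → ℝ := fun q => ((Fintype.equivFin Q q : ℕ) : ℝ) with ht_def
  have ht : Function.Injective t := by
    intro a b hab
    have : (Fintype.equivFin Q a : ℕ) = (Fintype.equivFin Q b : ℕ) := Nat.cast_injective hab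
    exact (Fintype.equivFin Q).injective (Fin.ext this)
  set d : ℕ := n - m + 2 with hd
  -- the complement sets
  have hcompl : ∀ i, ((M i)ᶜ : Finset Q).card = n - m := by
    intro i
    rw [Finset.card_compl, hcard, hn]
  -- polynomials
  set pol : Fin ℓ → Polynomial ℝ := fun i => ∏ q ∈ (M i)ᶜ, (X - C (t q)) with hpol
  have hmonic : ∀ i, (pol i).Monic := fun i =>
    monic_prod_of_monic _ _ (fun q _ => monic_X_sub_C _)
  have hdeg : ∀ i, (pol i).natDegree = n - m := by
    intro i
    rw [hpol]
    rw [Polynomial.natDegree_prod _ _ (fun q _ => X_sub_C_ne_zero _)]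
    simp [hcompl i]
  -- evaluation of pol
  have hevalpol : ∀ i (u : ℝ), (pol i).eval u = ∏ q ∈ (M i)ᶜ, (u - t q) := by
    intro i u
    simp [hpol, eval_prod]
  -- the functions
  set G : Fin ℓ → (ℝ × ℝ → ℝ) := fun i =>
    fun p => (X * pol i).eval p.1 * (pol i).eval p.2
      - (X * pol i).eval p.2 * (pol i).eval p.1 with hG
  have hGmem : ∀ i, G i ∈ S d := by
    intro i
    apply pair_fun_mem
    · have : (X * pol i).natDegree = 1 + (n - m) := by
        rw [(monic_X (R := ℝ)).natDegree_mul (hmonic i), natDegree_X, hdeg]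
      rw [this]; omega
    · rw [hdeg]; omega
  -- value of G j at the point of i
  have hGval : ∀ i j, G j (t (x i), t (y i)) =
      (t (x i) - t (y i)) * ((∏ q ∈ (M j)ᶜ, (t (x i) - t q)) * ∏ q ∈ (M j)ᶜ, (t (y i) - t q)) := by
    intro i j
    simp only [hG, eval_mul, eval_X, hevalpol]
    ring
  -- vanishing for j < i
  have hvanish : ∀ i j, j < i → G j (t (x i), t (y i)) = 0 := by
    intro i j hji
    rw [hGval]
    rcases hfp i j hji with h | h
    · have : (∏ q ∈ (M j)ᶜ, (t (x i) - t q)) = 0 :=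
        Finset.prod_eq_zero (Finset.mem_compl.2 h) (by ring)
      rw [this]; ring
    · have : (∏ q ∈ (M j)ᶜ, (t (y i) - t q)) = 0 :=
        Finset.prod_eq_zero (Finset.mem_compl.2 h) (by ring)
      rw [this]; ring
  -- nonvanishing on the diagonal
  have hdiag : ∀ i, G i (t (x i), t (y i)) ≠ 0 := by
    intro i
    rw [hGval]
    apply mul_ne_zero
    · exact sub_ne_zero_of_ne (fun h => hne i (ht h))
    apply mul_ne_zero
    · apply Finset.prod_ne_zero_iff.2
      intro q hq
      apply sub_ne_zero_of_ne
      intro h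
      exact (Finset.mem_compl.1 hq) (ht h ▸ (hmem i).1)
    · apply Finset.prod_ne_zero_iff.2
      intro q hq
      apply sub_ne_zero_of_ne
      intro h
      exact (Finset.mem_compl.1 hq) (ht h ▸ (hmem i).2)
  -- linear independence of G
  have hli : LinearIndependent ℝ G := by
    rw [linearIndependent_iff']
    intro s c hsum
    -- downward strong induction
    suffices H : ∀ k : ℕ, ∀ i ∈ s, ℓ - (i : ℕ) = k → c i = 0 by
      exact fun i hi => H _ i hi rfl
    intro k
    induction k using Nat.strong_induction_on with
    | _ k IH =>
      intro i hi hk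
      have heval : ∑ j ∈ s, c j * G j (t (x i), t (y i)) = 0 := by
        have := congrFun hsum (t (x i), t (y i))
        simpa [Finset.sum_apply] using this
      have hzero : ∀ j ∈ s, j ≠ i → c j * G j (t (x i), t (y i)) = 0 := by
        intro j hj hjne
        rcases lt_or_gt_of_ne hjne with h | h
        · rw [hvanish i j h]; ring
        · have hcj : c j = 0 := by
            apply IH (ℓ - (j : ℕ)) _ j hj rfl
            have h1 : (i : ℕ) < (j : ℕ) := h
            have h2 : (j : ℕ) < ℓ := j.isLt
            omega
          rw [hcj]; ring
      rw [Finset.sum_eq_single i hzero (fun h => absurd hi h)] at heval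
      exact (mul_eq_zero.1 heval).resolve_right (hdiag i)
  -- transfer to the submodule S d
  have hliS : LinearIndependent ℝ (fun i => (⟨G i, hGmem i⟩ : S d)) := by
    apply LinearIndependent.of_comp (S d).subtype
    convert hli
    rfl
  haveI : Module.Finite ℝ (S d) :=
    FiniteDimensional.span_of_finite ℝ (Set.Finite.image _ (pairSet d).finite_toSet)
  have hfin := hliS.fintype_card_le_finrank
  simp only [Fintype.card_fin] at hfin
  exact hfin.trans (finrank_S_le d)
end

section
/- If a DFA has a word w of rank r ≥ 2 and there exists some word of rank at most r−1, then there exists a word of rank at most r−1 whose length is at most 2|w| + n − r + 1. -/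
set_option linter.unusedSectionVars false

namespace PinAux

variable {Q A : Type*} [Fintype Q] [DecidableEq Q] (δ : Q → A → Q)

lemma actW_append (q : Q) (u v : List A) : actW δ q (u ++ v) = actW δ (actW δ q u) v :=
  List.foldl_append

lemma img_append (u v : List A) :
    img δ (u ++ v) = (img δ u).image (fun q => actW δ q v) := by
  simp only [img, Finset.image_image]
  exact Finset.image_congr fun q _ => actW_append δ q u v

lemma actW_mem_img (q : Q) (v : List A) : actW δ q v ∈ img δ v :=
  Finset.mem_image_of_mem _ (Finset.mem_univ q)

lemma card_img_append_le (u v : List A) : (img δ (u ++ v)).card ≤ (img δ v).card := by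
  apply Finset.card_le_card
  rw [img_append]
  intro q hq
  rcases Finset.mem_image.mp hq with ⟨p, _, rfl⟩
  exact actW_mem_img δ p v

/-- indicator vector -/
def chi (T : Finset Q) : Q → ℚ := fun q => if q ∈ T then 1 else 0

def Lfun (f : Q → Q) (s : Q) : (Q → ℚ) →ₗ[ℚ] ℚ where
  toFun x := ∑ q ∈ Finset.univ.filter (fun q => f q = s), x q
  map_add' x y := by simp [Finset.sum_add_distrib]
  map_smul' c x := by simp [Finset.mul_sum]

lemma Lfun_chi (f : Q → Q) (s : Q) (T : Finset Q) :
    Lfun f s (chi T) = ((T.filter (fun q => f q = s)).card : ℚ) := by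
  simp only [Lfun, LinearMap.coe_mk, AddHom.coe_mk, chi]
  rw [Finset.sum_ite_mem]
  rw [Finset.sum_const, nsmul_eq_mul, mul_one]
  congr 1
  congr 1
  ext q
  simp [and_comm]

def Afun (a : A) : (Q → ℚ) →ₗ[ℚ] (Q → ℚ) where
  toFun x := fun q => ∑ p ∈ Finset.univ.filter (fun p => δ p a = q), x p
  map_add' x y := by funext q; simp [Finset.sum_add_distrib]
  map_smul' c x := by funext q; simp [Finset.mul_sum]

lemma card_filter_fiber (f : Q → Q) (T : Finset Q) (h : Set.InjOn f T) (q : Q) :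
    (T.filter (fun p => f p = q)).card = if q ∈ T.image f then 1 else 0 := by
  split
  case isTrue ht =>
    rcases Finset.mem_image.mp ht with ⟨p, hp, rfl⟩
    rw [Finset.card_eq_one]
    refine ⟨p, ?_⟩
    ext x
    simp only [Finset.mem_filter, Finset.mem_singleton]
    constructor
    · rintro ⟨hx, hfx⟩; exact h hx hp hfx
    · rintro rfl; exact ⟨hp, rfl⟩
  case isFalse ht =>
    rw [Finset.card_eq_zero]
    ext x
    simp only [Finset.mem_filter, Finset.notMem_empty, iff_false, not_and]
    intro hx hfx
    exact ht (Finset.mem_image.mpr ⟨x, hx, hfx⟩)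

lemma Afun_apply_eq_Lfun (a : A) (x : Q → ℚ) (q : Q) :
    Afun δ a x q = Lfun (fun p => δ p a) q x := rfl

lemma Afun_chi (a : A) (T : Finset Q) (h : Set.InjOn (fun p => δ p a) T) :
    Afun δ a (chi T) = chi (T.image (fun p => δ p a)) := by
  funext q
  rw [Afun_apply_eq_Lfun, Lfun_chi, card_filter_fiber (fun p => δ p a) T h q]
  simp only [chi]
  split <;> simp_all

lemma Lfun_Afun (f : Q → Q) (s : Q) (a : A) (x : Q → ℚ) :
    Lfun f s (Afun δ a x) = Lfun (fun p => f (δ p a)) s x := by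
  simp only [Lfun, Afun, LinearMap.coe_mk, AddHom.coe_mk]
  have key := Finset.sum_fiberwise_of_maps_to (g := fun p => δ p a) (f := x)
    (s := Finset.univ.filter (fun p => f (δ p a) = s))
    (t := Finset.univ.filter (fun q => f q = s))
    (fun p hp => by simp only [Finset.mem_filter, Finset.mem_univ, true_and] at hp ⊢; exact hp)
  rw [← key]
  refine Finset.sum_congr rfl fun q hq => ?_
  simp only [Finset.mem_filter, Finset.mem_univ, true_and] at hq
  refine Finset.sum_congr ?_ fun _ _ => rfl
  ext p
  simp only [Finset.mem_filter, Finset.mem_univ, true_and]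
  constructor
  · rintro hp; exact ⟨by rw [hp]; exact hq, hp⟩
  · rintro ⟨_, h2⟩; exact h2

end PinAux

namespace PinAux

variable {Q A : Type*} [Fintype Q] [DecidableEq Q] (δ : Q → A → Q) (w : List A)

/-- `Bad v` : the image of the full state set under `w v w` is still `img δ w`. -/
def Bad (v : List A) : Prop :=
  (img δ (w ++ v)).image (fun q => actW δ q w) = img δ w

variable {δ w}

lemma Bad.card_eq {v : List A} (h : Bad δ w v) :
    (img δ (w ++ v)).card = (img δ w).card := by
  apply le_antisymm
  · rw [img_append]; exact Finset.card_image_le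
  · calc (img δ w).card = ((img δ (w ++ v)).image (fun q => actW δ q w)).card := by rw [h]
      _ ≤ (img δ (w ++ v)).card := Finset.card_image_le

lemma Bad.injOn {v : List A} (h : Bad δ w v) :
    Set.InjOn (fun q => actW δ q w) (img δ (w ++ v)) := by
  apply Finset.injOn_of_card_image_eq
  rw [h, h.card_eq]

lemma Bad.filter_card {v : List A} (h : Bad δ w v) (s : Q) :
    ((img δ (w ++ v)).filter (fun q => actW δ q w = s)).card
      = if s ∈ img δ w then 1 else 0 := by
  rw [card_filter_fiber _ _ h.injOn, h]

lemma img_letter (v : List A) (a : A) :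
    img δ (w ++ (v ++ [a])) = (img δ (w ++ v)).image (fun p => δ p a) := by
  rw [← List.append_assoc, img_append]
  rfl

lemma Bad.injOn_letter {v : List A} {a : A} (h1 : Bad δ w v) (h2 : Bad δ w (v ++ [a])) :
    Set.InjOn (fun p => δ p a) (img δ (w ++ v)) := by
  apply Finset.injOn_of_card_image_eq
  rw [← img_letter, h2.card_eq, h1.card_eq]

lemma Bad.filter_card_letter {v : List A} {a : A}
    (h1 : Bad δ w v) (h2 : Bad δ w (v ++ [a])) (s : Q) :
    ((img δ (w ++ v)).filter (fun p => actW δ (δ p a) w = s)).card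
      = if s ∈ img δ w then 1 else 0 := by
  have hinj : Set.InjOn (fun p => actW δ (δ p a) w) (img δ (w ++ v)) := by
    intro p hp q hq hpq
    apply h1.injOn_letter h2 hp hq
    apply h2.injOn _ _ hpq
    · rw [img_letter]; exact Finset.mem_image_of_mem _ hp
    · rw [img_letter]; exact Finset.mem_image_of_mem _ hq
  rw [card_filter_fiber _ _ hinj]
  congr 1
  rw [show ((img δ (w ++ v)).image fun p => actW δ (δ p a) w)
        = ((img δ (w ++ v)).image (fun p => δ p a)).image (fun q => actW δ q w) by
      rw [Finset.image_image]; rfl,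
    ← img_letter, h2]

lemma Bad.chi_letter {v : List A} {a : A}
    (h1 : Bad δ w v) (h2 : Bad δ w (v ++ [a])) :
    Afun δ a (chi (img δ (w ++ v))) = chi (img δ (w ++ (v ++ [a]))) := by
  rw [Afun_chi _ _ _ (h1.injOn_letter h2), img_letter]

end PinAux

namespace PinAux

variable {Q : Type*} [Fintype Q] [DecidableEq Q]

lemma finrank_ker_pi (c : Q → Q) (S : Finset Q) (hS : S = Finset.univ.image c) :
    Module.finrank ℚ
        (LinearMap.ker (LinearMap.pi (fun s : ↥S => Lfun c (s : Q))))
      = Fintype.card Q - S.card := by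
  set Φ := LinearMap.pi (fun s : ↥S => Lfun c (s : Q)) with hΦ
  have hex : ∀ s : ↥S, ∃ p : Q, c p = (s : Q) := by
    intro s
    have hs : (s : Q) ∈ Finset.univ.image c := by rw [← hS]; exact s.2
    rcases Finset.mem_image.mp hs with ⟨p, _, hp⟩
    exact ⟨p, hp⟩
  choose sec hsec using hex
  have hsurj : Function.Surjective Φ := by
    intro g
    refine ⟨fun q => ∑ s : ↥S, if q = sec s then g s else 0, ?_⟩
    funext s₀
    show (∑ q ∈ Finset.univ.filter (fun q => c q = (s₀ : Q)),
        ∑ s : ↥S, if q = sec s then g s else 0) = g s₀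
    rw [Finset.sum_comm]
    have hinner : ∀ s : ↥S,
        (∑ q ∈ Finset.univ.filter (fun q => c q = (s₀ : Q)),
          if q = sec s then g s else 0) = if s = s₀ then g s else 0 := by
      intro s
      rw [Finset.sum_ite_eq' (Finset.univ.filter (fun q => c q = (s₀ : Q))) (sec s)
        (fun _ => g s)]
      simp only [Finset.mem_filter, Finset.mem_univ, true_and, hsec]
      by_cases h : s = s₀
      · subst h; simp
      · rw [if_neg h, if_neg (fun hc => h (Subtype.ext hc))]
    rw [Finset.sum_congr rfl (fun s _ => hinner s),
      Finset.sum_ite_eq' Finset.univ s₀ (fun s => g s)]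
    simp
  have h1 := LinearMap.finrank_range_add_finrank_ker Φ
  rw [LinearMap.range_eq_top.mpr hsurj, finrank_top] at h1
  have h2 : Module.finrank ℚ (↥S → ℚ) = S.card := by
    rw [Module.finrank_pi, Fintype.card_coe]
  have h3 : Module.finrank ℚ (Q → ℚ) = Fintype.card Q := by
    rw [Module.finrank_pi]
  omega

end PinAux

namespace PinAux

variable {Q A : Type*} [Fintype Q] [DecidableEq Q] (δ : Q → A → Q) (w : List A)

/-- difference of indicators -/
def xv (v : List A) : Q → ℚ := chi (img δ (w ++ v)) - chi (img δ w)

/-- spans -/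
def VV (k : ℕ) : Submodule ℚ (Q → ℚ) :=
  Submodule.span ℚ (xv δ w '' {v : List A | v.length ≤ k})

lemma xv_nil : xv δ w [] = 0 := by
  simp [xv, List.append_nil]

lemma xv_mem_VV {v : List A} {k : ℕ} (h : v.length ≤ k) : xv δ w v ∈ VV δ w k :=
  Submodule.subset_span ⟨v, h, rfl⟩

lemma VV_mono {j k : ℕ} (h : j ≤ k) : VV δ w j ≤ VV δ w k :=
  Submodule.span_mono (Set.image_mono (fun _ hv => le_trans hv h))

lemma VV_le {k : ℕ} {p : Submodule ℚ (Q → ℚ)}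
    (h : ∀ v : List A, v.length ≤ k → xv δ w v ∈ p) : VV δ w k ≤ p := by
  apply Submodule.span_le.mpr
  rintro z ⟨v, hv, rfl⟩
  exact h v hv

end PinAux

/-- Pin's lemma: if w has rank r ≥ 2 and some word has rank ≤ r-1, then
there is such a word of length at most 2|w| + n - r + 1. -/
theorem pin_rank_decrease {Q A : Type*} [Fintype Q] [DecidableEq Q] (δ : Q → A → Q)
    (r : ℕ) (hr : 2 ≤ r) (w : List A) (hw : (img δ w).card = r)
    (hu : ∃ u : List A, (img δ u).card ≤ r - 1) :
    ∃ u : List A, (img δ u).card ≤ r - 1 ∧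
      u.length ≤ 2 * w.length + Fintype.card Q - r + 1 := by
  classical
  open PinAux in
  have hrn : r ≤ Fintype.card Q := by rw [← hw]; exact Finset.card_le_univ _
  set n := Fintype.card Q with hn
  set K := n - r + 1 with hK
  have hK1 : 1 ≤ K := by omega
  have main : ∃ v : List A, v.length ≤ K ∧ ¬ PinAux.Bad δ w v := by
    by_contra hcon
    push_neg at hcon
    -- hcon : ∀ v, v.length ≤ K → Bad δ w v
    have hbadnil : PinAux.Bad δ w [] := hcon [] (by simp)
    have hbada : ∀ a : A, PinAux.Bad δ w [a] := fun a => hcon [a] (by simpa using hK1)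
    set Φ := LinearMap.pi (fun s : ↥(img δ w) =>
      PinAux.Lfun (fun q => actW δ q w) (s : Q)) with hΦ
    have hker : Module.finrank ℚ (LinearMap.ker Φ) = n - r := by
      rw [hΦ, PinAux.finrank_ker_pi (fun q => actW δ q w) (img δ w) rfl, hw]
    have hVker : ∀ k, k ≤ K → PinAux.VV δ w k ≤ LinearMap.ker Φ := by
      intro k hkK
      apply PinAux.VV_le
      intro v hv
      have hb := hcon v (le_trans hv hkK)
      rw [LinearMap.mem_ker]
      funext s
      show PinAux.Lfun (fun q => actW δ q w) (s : Q) (PinAux.xv δ w v) = 0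
      rw [PinAux.xv, map_sub, PinAux.Lfun_chi, PinAux.Lfun_chi]
      have h1 := hb.filter_card (s : Q)
      have h2 := hbadnil.filter_card (s : Q)
      rw [List.append_nil] at h2
      rw [h1, h2, sub_self]
    have hstab : ∃ k, k + 1 ≤ K ∧ PinAux.VV δ w k = PinAux.VV δ w (k + 1) := by
      by_contra hne
      push_neg at hne
      have hgrow : ∀ k, k ≤ K → k ≤ Module.finrank ℚ (PinAux.VV δ w k) := by
        intro k
        induction k with
        | zero => intro _; exact Nat.zero_le _
        | succ k ih =>
          intro hk1
          have hlt : PinAux.VV δ w k < PinAux.VV δ w (k + 1) :=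
            lt_of_le_of_ne (PinAux.VV_mono δ w (Nat.le_succ k)) (hne k hk1)
          have h3 := Submodule.finrank_lt_finrank_of_lt hlt
          have ihk := ih (le_trans (Nat.le_succ k) hk1)
          omega
      have h1 : K ≤ Module.finrank ℚ (PinAux.VV δ w K) := hgrow K le_rfl
      have h2 : Module.finrank ℚ (PinAux.VV δ w K) ≤ Module.finrank ℚ (LinearMap.ker Φ) :=
        Submodule.finrank_mono (hVker K le_rfl)
      omega
    obtain ⟨k, hk1, hkeq⟩ := hstab
    have key : ∀ (l : ℕ) (v : List A), v.length ≤ k + 1 + l →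
        PinAux.Bad δ w v ∧ PinAux.xv δ w v ∈ PinAux.VV δ w k := by
      intro l
      induction l with
      | zero =>
        intro v hv
        refine ⟨hcon v (by omega), ?_⟩
        rw [hkeq]
        exact PinAux.xv_mem_VV δ w (by omega)
      | succ l ih =>
        intro v hv
        rcases Nat.lt_or_ge v.length (k + 1 + l + 1) with hlt | hge
        · exact ih v (by omega)
        · have hvlen : v.length = k + 1 + l + 1 := by omega
          rcases List.eq_nil_or_concat v with rfl | ⟨y, a, hva⟩
          · simp at hvlen
          · rw [List.concat_eq_append] at hva
            subst hva
            have hylen : y.length ≤ k + 1 + l := by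
              simp only [List.length_append, List.length_singleton] at hvlen; omega
            obtain ⟨hbady, hymem⟩ := ih y hylen
            -- (i) the counting fact
            have hcount : ∀ s ∈ img δ w,
                ((img δ (w ++ y)).filter (fun p => actW δ (δ p a) w = s)).card = 1 := by
              intro s hs
              set F := PinAux.Lfun (fun p => actW δ (δ p a) w) s with hF
              have hVF : PinAux.VV δ w k ≤ LinearMap.ker F := by
                apply PinAux.VV_le
                intro u hu'
                have hbu : PinAux.Bad δ w u := hcon u (by omega)
                have hbua : PinAux.Bad δ w (u ++ [a]) :=
                  hcon (u ++ [a]) (by simp only [List.length_append, List.length_singleton]; omega)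
                rw [LinearMap.mem_ker, PinAux.xv, map_sub, hF, PinAux.Lfun_chi, PinAux.Lfun_chi]
                have h1 := PinAux.Bad.filter_card_letter hbu hbua s
                have h2 := PinAux.Bad.filter_card_letter hbadnil (hbada a) s
                rw [List.append_nil] at h2
                rw [h1, h2, sub_self]
              have hxy0 : F (PinAux.xv δ w y) = 0 := hVF hymem
              have hchi : PinAux.chi (img δ (w ++ y))
                  = PinAux.chi (img δ w) + PinAux.xv δ w y := by
                rw [PinAux.xv]; abel
              have hFval : F (PinAux.chi (img δ (w ++ y))) = 1 := by
                rw [hchi, map_add, hxy0, add_zero, hF, PinAux.Lfun_chi]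
                have h2 := PinAux.Bad.filter_card_letter hbadnil (hbada a) s
                rw [List.append_nil] at h2
                rw [h2, if_pos hs]
                norm_num
              rw [hF, PinAux.Lfun_chi] at hFval
              exact_mod_cast hFval
            -- (ii) Bad (y ++ [a])
            have hbadya : PinAux.Bad δ w (y ++ [a]) := by
              apply Finset.Subset.antisymm
              · intro s hs
                rcases Finset.mem_image.mp hs with ⟨q, _, rfl⟩
                exact PinAux.actW_mem_img δ q w
              · intro s hs
                have h1 := hcount s hs
                have hne : ((img δ (w ++ y)).filter
                    (fun p => actW δ (δ p a) w = s)).Nonempty := by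
                  rw [← Finset.card_pos, h1]; norm_num
                rcases hne with ⟨p, hp⟩
                rcases Finset.mem_filter.mp hp with ⟨hpT, hps⟩
                apply Finset.mem_image.mpr
                refine ⟨δ p a, ?_, hps⟩
                rw [PinAux.img_letter]
                exact Finset.mem_image_of_mem _ hpT
            -- (iii) membership in V k
            have hAmap : ∀ u : List A, PinAux.Bad δ w u → PinAux.Bad δ w (u ++ [a]) →
                PinAux.Afun δ a (PinAux.xv δ w u)
                  = PinAux.xv δ w (u ++ [a]) - PinAux.xv δ w [a] := by
              intro u hb1 hb2
              have e1 := PinAux.Bad.chi_letter hb1 hb2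
              have e2 := PinAux.Bad.chi_letter hbadnil (hbada a)
              rw [List.append_nil, List.nil_append] at e2
              simp only [PinAux.xv]
              rw [map_sub, e1, e2]
              abel
            have hmapV : PinAux.Afun δ a (PinAux.xv δ w y) ∈ PinAux.VV δ w k := by
              have hle : Submodule.map (PinAux.Afun δ a) (PinAux.VV δ w k)
                  ≤ PinAux.VV δ w k := by
                rw [PinAux.VV, Submodule.map_span, Submodule.span_le]
                rintro _ ⟨_, ⟨u, hu', rfl⟩, rfl⟩
                simp only [Set.mem_setOf_eq] at hu'
                have hbu : PinAux.Bad δ w u := hcon u (by omega)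
                have hbua : PinAux.Bad δ w (u ++ [a]) :=
                  hcon (u ++ [a]) (by simp only [List.length_append, List.length_singleton]; omega)
                rw [SetLike.mem_coe, hAmap u hbu hbua]
                have hm1 : PinAux.xv δ w (u ++ [a]) ∈ PinAux.VV δ w k := by
                  rw [hkeq]
                  exact PinAux.xv_mem_VV δ w
                    (by simp only [List.length_append, List.length_singleton]; omega)
                have hm2 : PinAux.xv δ w [a] ∈ PinAux.VV δ w k := by
                  rw [hkeq]
                  exact PinAux.xv_mem_VV δ w (by simp)
                exact Submodule.sub_mem _ hm1 hm2
              exact hle (Submodule.mem_map_of_mem hymem)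
            refine ⟨hbadya, ?_⟩
            have h2 : PinAux.xv δ w (y ++ [a])
                = PinAux.Afun δ a (PinAux.xv δ w y) + PinAux.xv δ w [a] := by
              rw [hAmap y hbady hbadya]; abel
            rw [h2]
            refine Submodule.add_mem _ hmapV ?_
            rw [hkeq]
            exact PinAux.xv_mem_VV δ w (by simp)
    obtain ⟨u₀, hu₀⟩ := hu
    have hbu := (key u₀.length u₀ (by omega)).1
    have h1 := hbu.card_eq
    have h2 := PinAux.card_img_append_le δ w u₀
    omega
  obtain ⟨v, hvlen, hvbad⟩ := main
  refine ⟨w ++ v ++ w, ?_, ?_⟩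
  · have himg : img δ (w ++ v ++ w)
        = (img δ (w ++ v)).image (fun q => actW δ q w) := PinAux.img_append δ (w ++ v) w
    have hsub : (img δ (w ++ v)).image (fun q => actW δ q w) ⊆ img δ w := by
      intro s hs
      rcases Finset.mem_image.mp hs with ⟨q, _, rfl⟩
      exact PinAux.actW_mem_img δ q w
    have hlt : (img δ (w ++ v ++ w)).card < r := by
      rw [himg, ← hw]
      exact Finset.card_lt_card (Finset.ssubset_iff_subset_ne.mpr ⟨hsub, hvbad⟩)
    omega
  · simp only [List.length_append]
    omega
end

section
/- For every n ≥ 2, the ternary automaton A_n with states v_1,...,v_n, where a maps v_i to v_{i+1} for 1 ≤ i ≤ n−2, b maps v_i to v_{i−1} for 2 ≤ i ≤ n−1, c maps v_{⌊n/2⌋} to v_n, and all other transitions are identities, is synchronizing with shortest reset word of length exactly n + ⌊n/2⌋ − 2. -/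
def apAut (n : ℕ) : Fin (n + 2) → Fin 3 → Fin (n + 2) := fun q x =>
  if x = 0 then (if h : (q : ℕ) < n then ⟨(q : ℕ) + 1, by omega⟩ else q)
  else if x = 1 then
    (if h : 1 ≤ (q : ℕ) ∧ (q : ℕ) ≤ n then ⟨(q : ℕ) - 1, by omega⟩ else q)
  else (if (q : ℕ) = (n + 2) / 2 - 1 then ⟨n + 1, by omega⟩ else q)

namespace ApProof

def kk (n : ℕ) : ℕ := (n + 2) / 2 - 1

lemma kk_spec (n : ℕ) : 2 * kk n ≤ n ∧ n ≤ 2 * kk n + 1 := by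
  unfold kk; omega

def cF (n k p q : ℕ) : ℕ :=
  min (min ((k - p) + 1 + 2 * (q - k)) ((q - min p k) + (k - p) + 1))
      (min ((n - q) + (n - k) + 1) (p + k + 1))

section
variable {n k : ℕ} (hk : 2 * k ≤ n ∧ n ≤ 2 * k + 1)
include hk

lemma L1 : cF n k k k ≤ 1 := by simp only [cF]; omega

lemma L2 {p q : ℕ} (h : p ≤ q) (h2 : q < n) : cF n k p q ≤ cF n k (p+1) (q+1) + 1 := by
  simp only [cF]
  rw [← min_add_add_right, ← min_add_add_right, ← min_add_add_right]
  refine le_min (le_min ?_ ?_) (le_min ?_ ?_) <;> omega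

lemma L3 {p q : ℕ} (h0 : 1 ≤ p) (h : p ≤ q) (h2 : q ≤ n) :
    cF n k p q ≤ cF n k (p-1) (q-1) + 1 := by
  simp only [cF]
  rw [← min_add_add_right, ← min_add_add_right, ← min_add_add_right]
  refine le_min (le_min ?_ ?_) (le_min ?_ ?_) <;> omega

lemma L4 {p p' : ℕ} (h : p ≤ p') (h2 : p' ≤ n) : cF n k p n ≤ cF n k p' n := by
  simp only [cF]
  refine le_min (le_min ?_ ?_) (le_min ?_ ?_) <;> omega

lemma L5 {q q' : ℕ} (h : q' ≤ q) (h2 : q ≤ n) : cF n k 0 q ≤ cF n k 0 q' := by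
  simp only [cF]
  refine le_min (le_min ?_ ?_) (le_min ?_ ?_) <;> omega

lemma L6 {p' q : ℕ} (h1 : k < p') (h2 : p' ≤ q) (h3 : q ≤ n) :
    cF n k k q ≤ cF n k p' q := by
  simp only [cF]
  refine le_min (le_min ?_ ?_) (le_min ?_ ?_) <;> omega

lemma L7 {p q' : ℕ} (h1 : p ≤ q') (h2 : q' < k) :
    cF n k p k ≤ cF n k p q' := by
  simp only [cF]
  refine le_min (le_min ?_ ?_) (le_min ?_ ?_) <;> omega

lemma Lfull : cF n k 0 n = k + 1 := by simp only [cF]; omega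

end



section Automaton

variable (n : ℕ)

def snk : Fin (n + 2) := ⟨n + 1, by omega⟩

def kst : Fin (n + 2) := ⟨kk n, by have := kk_spec n; omega⟩

lemma val_a (q : Fin (n + 2)) :
    ((apAut n q 0 : Fin (n + 2)) : ℕ) = if (q : ℕ) < n then (q : ℕ) + 1 else (q : ℕ) := by
  unfold apAut
  rw [if_pos rfl]
  split <;> rfl

lemma val_b (q : Fin (n + 2)) :
    ((apAut n q 1 : Fin (n + 2)) : ℕ) =
      if 1 ≤ (q : ℕ) ∧ (q : ℕ) ≤ n then (q : ℕ) - 1 else (q : ℕ) := by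
  unfold apAut
  rw [if_neg (by decide), if_pos rfl]
  split <;> rfl

lemma val_c (q : Fin (n + 2)) :
    ((apAut n q 2 : Fin (n + 2)) : ℕ) = if (q : ℕ) = kk n then n + 1 else (q : ℕ) := by
  unfold apAut kk
  rw [if_neg (by decide), if_neg (by decide)]
  split <;> rfl

lemma a_snk_iff (q : Fin (n + 2)) : apAut n q 0 = snk n ↔ q = snk n := by
  have hq := q.isLt
  rw [Fin.ext_iff, Fin.ext_iff, val_a]
  show (if (q : ℕ) < n then (q : ℕ) + 1 else (q : ℕ)) = ((snk n : Fin (n+2)) : ℕ) ↔ _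
  simp only [snk]
  split <;> omega

lemma b_snk_iff (q : Fin (n + 2)) : apAut n q 1 = snk n ↔ q = snk n := by
  have hq := q.isLt
  rw [Fin.ext_iff, Fin.ext_iff, val_b]
  simp only [snk]
  split <;> omega

lemma mono_a : Monotone (fun q : Fin (n + 2) => apAut n q 0) := by
  intro q r h
  rw [Fin.le_def] at h ⊢
  simp only [val_a]
  have := q.isLt; have := r.isLt
  split <;> split <;> omega

lemma mono_b : Monotone (fun q : Fin (n + 2) => apAut n q 1) := by
  intro q r h
  rw [Fin.le_def] at h ⊢
  simp only [val_b]
  have := q.isLt; have := r.isLt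
  split <;> split <;> omega

lemma erase_image (f : Fin (n + 2) → Fin (n + 2)) (hf : ∀ q, f q = snk n ↔ q = snk n)
    (S : Finset (Fin (n + 2))) :
    (S.image f).erase (snk n) = (S.erase (snk n)).image f := by
  ext r
  simp only [Finset.mem_erase, Finset.mem_image]
  constructor
  · rintro ⟨hr, q, hq, rfl⟩
    exact ⟨q, ⟨fun he => hr (by rw [(hf q).2 he]), hq⟩, rfl⟩
  · rintro ⟨q, ⟨hq1, hq2⟩, rfl⟩
    exact ⟨fun he => hq1 ((hf q).1 he), q, hq2, rfl⟩

lemma kst_ne_snk : kst n ≠ snk n := by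
  have := kk_spec n
  rw [Ne, Fin.ext_iff]
  simp only [kst, snk]
  omega

lemma erase_image_c (S : Finset (Fin (n + 2))) :
    (S.image (fun q => apAut n q 2)).erase (snk n) = (S.erase (snk n)).erase (kst n) := by
  ext r
  simp only [Finset.mem_erase, Finset.mem_image]
  constructor
  · rintro ⟨hr, q, hq, rfl⟩
    by_cases h : (q : ℕ) = kk n
    · exfalso
      apply hr
      apply Fin.ext
      rw [val_c, if_pos h]
      rfl
    · have hv : apAut n q 2 = q := Fin.ext (by rw [val_c, if_neg h])
      rw [hv] at hr ⊢
      exact ⟨fun he => h (by rw [he]; rfl), hr, hq⟩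
  · rintro ⟨hrk, hrs, hrS⟩
    refine ⟨hrs, r, hrS, ?_⟩
    apply Fin.ext
    have hne : ¬((r : ℕ) = kk n) := fun h => hrk (Fin.ext h)
    rw [val_c, if_neg hne]

lemma card_image_ge {α : Type*} [DecidableEq α] (T : Finset α) (f : α → α) (t0 : α)
    (hinj : Set.InjOn f ((T.erase t0) : Set α)) : T.card - 1 ≤ (T.image f).card := by
  calc T.card - 1 ≤ (T.erase t0).card := Finset.pred_card_le_card_erase
    _ = ((T.erase t0).image f).card := (Finset.card_image_of_injOn hinj).symm
    _ ≤ (T.image f).card :=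
        Finset.card_le_card (Finset.image_subset_image (Finset.erase_subset _ _))

lemma min'_image {α β : Type*} [LinearOrder α] [LinearOrder β] [DecidableEq β] {f : α → β}
    (hf : Monotone f) (T : Finset α) (h : T.Nonempty) :
    (T.image f).min' (h.image f) = f (T.min' h) := by
  apply le_antisymm
  · exact Finset.min'_le _ _ (Finset.mem_image_of_mem f (T.min'_mem h))
  · refine Finset.le_min' _ _ _ ?_
    intro y hy
    obtain ⟨x, hx, rfl⟩ := Finset.mem_image.1 hy
    exact hf (Finset.min'_le _ _ hx)

lemma max'_image {α β : Type*} [LinearOrder α] [LinearOrder β] [DecidableEq β] {f : α → β}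
    (hf : Monotone f) (T : Finset α) (h : T.Nonempty) :
    (T.image f).max' (h.image f) = f (T.max' h) := by
  apply le_antisymm
  · refine Finset.max'_le _ _ _ ?_
    intro y hy
    obtain ⟨x, hx, rfl⟩ := Finset.mem_image.1 hy
    exact hf (Finset.le_max' _ _ hx)
  · exact Finset.le_max' _ _ (Finset.mem_image_of_mem f (T.max'_mem h))

/-- The potential of a set of path states. -/
def Psi (T : Finset (Fin (n + 2))) : ℕ :=
  if h : T.Nonempty then
    (T.card - 1) + cF n (kk n) ((T.min' h : Fin (n + 2)) : ℕ) ((T.max' h : Fin (n + 2)) : ℕ)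
  else 0

end Automaton


section Steps

variable {n : ℕ}

lemma L5' {k p q q' : ℕ} (hk : 2 * k ≤ n ∧ n ≤ 2 * k + 1) (hp : p = 0)
    (h : q' ≤ q) (h2 : q ≤ n) : cF n k p q ≤ cF n k p q' := by
  subst hp; exact L5 hk h h2

lemma Lstepc {k p q p' q' : ℕ} (hk : 2 * k ≤ n ∧ n ≤ 2 * k + 1)
    (hpk : p ≤ k) (hkq : k ≤ q) (hqn : q ≤ n)
    (hpp' : p ≤ p') (hq'q : q' ≤ q) (hp'q' : p' ≤ q')
    (hp'k : p' ≠ k) (hq'k : q' ≠ k)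
    (hminkeep : p ≠ k → p' ≤ p) (hmaxkeep : q ≠ k → q ≤ q') :
    cF n k p q ≤ cF n k p' q' := by
  by_cases hpk2 : p = k
  · by_cases hqk2 : q = k
    · exfalso; omega
    · have hqq' : q ≤ q' := hmaxkeep hqk2
      have he : q' = q := le_antisymm hq'q hqq'
      subst hpk2
      rw [he]
      exact L6 hk (by omega) (by omega) hqn
  · by_cases hqk2 : q = k
    · have hpe : p' = p := le_antisymm (hminkeep hpk2) hpp'
      subst hqk2
      rw [hpe]
      exact L7 hk (by omega) (by omega)
    · have hpe : p' = p := le_antisymm (hminkeep hpk2) hpp'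
      have hqe : q' = q := le_antisymm hq'q (hmaxkeep hqk2)
      rw [hpe, hqe]

lemma step_a (T : Finset (Fin (n + 2))) (hTn : ∀ r ∈ T, (r : ℕ) ≤ n) :
    Psi n T ≤ Psi n (T.image (fun q => apAut n q 0)) + 1 := by
  by_cases h : T.Nonempty
  · have hk := kk_spec n
    have h' : (T.image (fun q => apAut n q 0)).Nonempty := h.image _
    rw [Psi, dif_pos h, Psi, dif_pos h']
    rw [show (T.image (fun q => apAut n q 0)).min' h' = apAut n (T.min' h) 0 from
          min'_image (mono_a n) T h,
        show (T.image (fun q => apAut n q 0)).max' h' = apAut n (T.max' h) 0 from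
          max'_image (mono_a n) T h]
    set p := ((T.min' h : Fin (n + 2)) : ℕ) with hpdef
    set q := ((T.max' h : Fin (n + 2)) : ℕ) with hqdef
    have hpq : p ≤ q := Fin.le_def.1 (Finset.min'_le _ _ (T.max'_mem h))
    have hqn : q ≤ n := hTn _ (T.max'_mem h)
    rw [val_a n (T.min' h), val_a n (T.max' h), ← hpdef, ← hqdef]
    by_cases hqlt : q < n
    · have hinj : Set.InjOn (fun q => apAut n q 0) (T : Set (Fin (n + 2))) := by
        intro x hx y hy hxy
        have hx' : (x : ℕ) < n := by
          have : (x : ℕ) ≤ q := Fin.le_def.1 (Finset.le_max' _ _ (Finset.mem_coe.1 hx))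
          omega
        have hy' : (y : ℕ) < n := by
          have : (y : ℕ) ≤ q := Fin.le_def.1 (Finset.le_max' _ _ (Finset.mem_coe.1 hy))
          omega
        have hv := congrArg Fin.val hxy
        rw [val_a, val_a, if_pos hx', if_pos hy'] at hv
        exact Fin.ext (by omega)
      have hcard : (T.image (fun q => apAut n q 0)).card = T.card :=
        Finset.card_image_of_injOn hinj
      rw [hcard, if_pos (by omega : p < n), if_pos hqlt]
      have := L2 hk hpq hqlt
      omega
    · have hinj : Set.InjOn (fun q => apAut n q 0)
          ((T.erase (⟨n, by omega⟩ : Fin (n + 2))) : Set (Fin (n + 2))) := by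
        intro x hx y hy hxy
        obtain ⟨hx1, hx2⟩ := Finset.mem_erase.1 (Finset.mem_coe.1 hx)
        obtain ⟨hy1, hy2⟩ := Finset.mem_erase.1 (Finset.mem_coe.1 hy)
        have hx' : (x : ℕ) < n := by
          have h1 : (x : ℕ) ≤ n := hTn _ hx2
          have h2 : (x : ℕ) ≠ n := fun hh => hx1 (Fin.ext hh)
          omega
        have hy' : (y : ℕ) < n := by
          have h1 : (y : ℕ) ≤ n := hTn _ hy2
          have h2 : (y : ℕ) ≠ n := fun hh => hy1 (Fin.ext hh)
          omega
        have hv := congrArg Fin.val hxy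
        rw [val_a, val_a, if_pos hx', if_pos hy'] at hv
        exact Fin.ext (by omega)
      have hcard : T.card - 1 ≤ (T.image (fun q => apAut n q 0)).card :=
        card_image_ge T _ _ hinj
      have hcard1 : 1 ≤ (T.image (fun q => apAut n q 0)).card := Finset.card_pos.2 h'
      have hq' : q = n := by omega
      have hcle : cF n (kk n) p q ≤
          cF n (kk n) (if p < n then p + 1 else p) (if q < n then q + 1 else q) := by
        rw [if_neg hqlt, hq']
        split
        · exact L4 hk (by omega) (by omega)
        · exact le_refl _
      omega
  · rw [Psi, dif_neg h]; exact Nat.zero_le _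

lemma step_b (T : Finset (Fin (n + 2))) (hTn : ∀ r ∈ T, (r : ℕ) ≤ n) :
    Psi n T ≤ Psi n (T.image (fun q => apAut n q 1)) + 1 := by
  by_cases h : T.Nonempty
  · have hk := kk_spec n
    have h' : (T.image (fun q => apAut n q 1)).Nonempty := h.image _
    rw [Psi, dif_pos h, Psi, dif_pos h']
    rw [show (T.image (fun q => apAut n q 1)).min' h' = apAut n (T.min' h) 1 from
          min'_image (mono_b n) T h,
        show (T.image (fun q => apAut n q 1)).max' h' = apAut n (T.max' h) 1 from
          max'_image (mono_b n) T h]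
    set p := ((T.min' h : Fin (n + 2)) : ℕ) with hpdef
    set q := ((T.max' h : Fin (n + 2)) : ℕ) with hqdef
    have hpq : p ≤ q := Fin.le_def.1 (Finset.min'_le _ _ (T.max'_mem h))
    have hqn : q ≤ n := hTn _ (T.max'_mem h)
    rw [val_b n (T.min' h), val_b n (T.max' h), ← hpdef, ← hqdef]
    by_cases hp1 : 1 ≤ p
    · have hinj : Set.InjOn (fun q => apAut n q 1) (T : Set (Fin (n + 2))) := by
        intro x hx y hy hxy
        have hx' : 1 ≤ (x : ℕ) ∧ (x : ℕ) ≤ n := by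
          have h1 : p ≤ (x : ℕ) := Fin.le_def.1 (Finset.min'_le _ _ (Finset.mem_coe.1 hx))
          have h2 : (x : ℕ) ≤ n := hTn _ (Finset.mem_coe.1 hx)
          omega
        have hy' : 1 ≤ (y : ℕ) ∧ (y : ℕ) ≤ n := by
          have h1 : p ≤ (y : ℕ) := Fin.le_def.1 (Finset.min'_le _ _ (Finset.mem_coe.1 hy))
          have h2 : (y : ℕ) ≤ n := hTn _ (Finset.mem_coe.1 hy)
          omega
        have hv := congrArg Fin.val hxy
        rw [val_b, val_b, if_pos hx', if_pos hy'] at hv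
        exact Fin.ext (by omega)
      have hcard : (T.image (fun q => apAut n q 1)).card = T.card :=
        Finset.card_image_of_injOn hinj
      rw [hcard, if_pos (by omega : 1 ≤ p ∧ p ≤ n), if_pos (by omega : 1 ≤ q ∧ q ≤ n)]
      have := L3 hk hp1 hpq hqn
      omega
    · have hinj : Set.InjOn (fun q => apAut n q 1)
          ((T.erase (⟨0, by omega⟩ : Fin (n + 2))) : Set (Fin (n + 2))) := by
        intro x hx y hy hxy
        obtain ⟨hx1, hx2⟩ := Finset.mem_erase.1 (Finset.mem_coe.1 hx)
        obtain ⟨hy1, hy2⟩ := Finset.mem_erase.1 (Finset.mem_coe.1 hy)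
        have hx' : 1 ≤ (x : ℕ) ∧ (x : ℕ) ≤ n := by
          have h1 : (x : ℕ) ≤ n := hTn _ hx2
          have h2 : (x : ℕ) ≠ 0 := fun hh => hx1 (Fin.ext hh)
          omega
        have hy' : 1 ≤ (y : ℕ) ∧ (y : ℕ) ≤ n := by
          have h1 : (y : ℕ) ≤ n := hTn _ hy2
          have h2 : (y : ℕ) ≠ 0 := fun hh => hy1 (Fin.ext hh)
          omega
        have hv := congrArg Fin.val hxy
        rw [val_b, val_b, if_pos hx', if_pos hy'] at hv
        exact Fin.ext (by omega)
      have hcard : T.card - 1 ≤ (T.image (fun q => apAut n q 1)).card :=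
        card_image_ge T _ _ hinj
      have hcard1 : 1 ≤ (T.image (fun q => apAut n q 1)).card := Finset.card_pos.2 h'
      have hp0 : p = 0 := by omega
      have hcle : cF n (kk n) p q ≤
          cF n (kk n) (if 1 ≤ p ∧ p ≤ n then p - 1 else p)
            (if 1 ≤ q ∧ q ≤ n then q - 1 else q) := by
        rw [if_neg (by omega : ¬(1 ≤ p ∧ p ≤ n))]
        exact L5' hk hp0 (by split <;> omega) hqn
      omega
  · rw [Psi, dif_neg h]; exact Nat.zero_le _

lemma step_c (T : Finset (Fin (n + 2))) (hTn : ∀ r ∈ T, (r : ℕ) ≤ n) :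
    Psi n T ≤ Psi n (T.erase (kst n)) + 1 := by
  have hk := kk_spec n
  by_cases h : T.Nonempty
  · by_cases hkT : kst n ∈ T
    · by_cases h' : (T.erase (kst n)).Nonempty
      · rw [Psi, dif_pos h, Psi, dif_pos h']
        have hsub : T.erase (kst n) ⊆ T := Finset.erase_subset _ _
        have hcard : (T.erase (kst n)).card = T.card - 1 := Finset.card_erase_of_mem hkT
        have hc1 : 1 ≤ (T.erase (kst n)).card := Finset.card_pos.2 h'
        set p := ((T.min' h : Fin (n + 2)) : ℕ)
        set q := ((T.max' h : Fin (n + 2)) : ℕ)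
        set p' := (((T.erase (kst n)).min' h' : Fin (n + 2)) : ℕ)
        set q' := (((T.erase (kst n)).max' h' : Fin (n + 2)) : ℕ)
        have hpk : p ≤ kk n := Fin.le_def.1 (Finset.min'_le _ _ hkT)
        have hkq : kk n ≤ q := Fin.le_def.1 (Finset.le_max' _ _ hkT)
        have hqn : q ≤ n := hTn _ (T.max'_mem h)
        have hpp' : p ≤ p' :=
          Fin.le_def.1 (Finset.min'_le _ _ (hsub ((T.erase (kst n)).min'_mem h')))
        have hq'q : q' ≤ q :=
          Fin.le_def.1 (Finset.le_max' _ _ (hsub ((T.erase (kst n)).max'_mem h')))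
        have hp'q' : p' ≤ q' :=
          Fin.le_def.1 (Finset.min'_le _ _ ((T.erase (kst n)).max'_mem h'))
        have hp'k : p' ≠ kk n := by
          have hme := (Finset.mem_erase.1 ((T.erase (kst n)).min'_mem h')).1
          exact fun hh => hme (Fin.ext hh)
        have hq'k : q' ≠ kk n := by
          have hme := (Finset.mem_erase.1 ((T.erase (kst n)).max'_mem h')).1
          exact fun hh => hme (Fin.ext hh)
        have hminkeep : p ≠ kk n → p' ≤ p := by
          intro hp
          have hmem : T.min' h ∈ T.erase (kst n) :=
            Finset.mem_erase.2 ⟨fun hh => hp (congrArg Fin.val hh), T.min'_mem h⟩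
          exact Fin.le_def.1 (Finset.min'_le _ _ hmem)
        have hmaxkeep : q ≠ kk n → q ≤ q' := by
          intro hq
          have hmem : T.max' h ∈ T.erase (kst n) :=
            Finset.mem_erase.2 ⟨fun hh => hq (congrArg Fin.val hh), T.max'_mem h⟩
          exact Fin.le_def.1 (Finset.le_max' _ _ hmem)
        have hcle := Lstepc hk hpk hkq hqn hpp' hq'q hp'q' hp'k hq'k hminkeep hmaxkeep
        omega
      · have hTe : T = {kst n} := by
          rcases (Finset.erase_eq_empty_iff T (kst n)).1
              (Finset.not_nonempty_iff_eq_empty.1 h') with h1 | h1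
          · exact absurd h1 (Finset.nonempty_iff_ne_empty.1 h)
          · exact h1
        subst hTe
        rw [Finset.erase_singleton]
        have hpe : Psi n (∅ : Finset (Fin (n + 2))) = 0 := by
          rw [Psi, dif_neg (by simp)]
        rw [hpe, Psi, dif_pos (Finset.singleton_nonempty _)]
        simp only [Finset.min'_singleton, Finset.max'_singleton, Finset.card_singleton]
        have : ((kst n : Fin (n + 2)) : ℕ) = kk n := rfl
        rw [this]
        have := L1 hk
        omega
    · rw [Finset.erase_eq_of_notMem hkT]
      exact Nat.le_succ _
  · rw [Psi, dif_neg h]; exact Nat.zero_le _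

end Steps

section Assembly

variable (n : ℕ)

def Phi (S : Finset (Fin (n + 2))) : ℕ := Psi n (S.erase (snk n))

lemma step (x : Fin 3) (S : Finset (Fin (n + 2))) :
    Phi n S ≤ Phi n (S.image (fun q => apAut n q x)) + 1 := by
  have hTn : ∀ r ∈ S.erase (snk n), (r : ℕ) ≤ n := by
    intro r hr
    have h1 := (Finset.mem_erase.1 hr).1
    have h2 := r.isLt
    have h3 : (r : ℕ) ≠ n + 1 := fun hh => h1 (Fin.ext hh)
    omega
  have hx : x = 0 ∨ x = 1 ∨ x = 2 := by revert x; decide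
  rcases hx with rfl | rfl | rfl
  · rw [Phi, Phi, erase_image n _ (a_snk_iff n) S]
    exact step_a _ hTn
  · rw [Phi, Phi, erase_image n _ (b_snk_iff n) S]
    exact step_b _ hTn
  · rw [Phi, Phi, erase_image_c n S]
    exact step_c _ hTn

lemma key : ∀ (w : List (Fin 3)) (S : Finset (Fin (n + 2))),
    (∀ q ∈ S, actW (apAut n) q w = snk n) → Phi n S ≤ w.length := by
  intro w
  induction w with
  | nil =>
    intro S hS
    have hE : S.erase (snk n) = ∅ := by
      rw [Finset.eq_empty_iff_forall_notMem]
      intro r hr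
      obtain ⟨h1, h2⟩ := Finset.mem_erase.1 hr
      exact h1 (hS r h2)
    rw [Phi, hE, Psi, dif_neg (by simp)]
    exact Nat.zero_le _
  | cons x w ih =>
    intro S hS
    have h2 : ∀ q ∈ S.image (fun q => apAut n q x), actW (apAut n) q w = snk n := by
      intro q' hq'
      obtain ⟨s, hs, rfl⟩ := Finset.mem_image.1 hq'
      exact hS s hs
    calc Phi n S ≤ Phi n (S.image (fun q => apAut n q x)) + 1 := step n x S
      _ ≤ w.length + 1 := Nat.add_le_add_right (ih _ h2) 1
      _ = (x :: w).length := rfl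

lemma phi_univ : Phi n Finset.univ = n + (kk n + 1) := by
  have hk := kk_spec n
  have hz : (⟨0, by omega⟩ : Fin (n + 2)) ∈ Finset.univ.erase (snk n) := by
    refine Finset.mem_erase.2 ⟨?_, Finset.mem_univ _⟩
    intro hh
    have := congrArg Fin.val hh
    simp only [snk] at this
    omega
  have hne : (Finset.univ.erase (snk n)).Nonempty := ⟨_, hz⟩
  rw [Phi, Psi, dif_pos hne]
  have hcard : (Finset.univ.erase (snk n)).card = n + 1 := by
    rw [Finset.card_erase_of_mem (Finset.mem_univ _), Finset.card_univ, Fintype.card_fin]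
    omega
  have hTn : ∀ r ∈ Finset.univ.erase (snk n), (r : ℕ) ≤ n := by
    intro r hr
    have h1 := (Finset.mem_erase.1 hr).1
    have h2 := r.isLt
    have h3 : (r : ℕ) ≠ n + 1 := fun hh => h1 (Fin.ext hh)
    omega
  have hmin : (((Finset.univ.erase (snk n)).min' hne : Fin (n + 2)) : ℕ) = 0 := by
    have h4 : (((Finset.univ.erase (snk n)).min' hne : Fin (n + 2)) : ℕ) ≤ 0 :=
      Fin.le_def.1 (Finset.min'_le _ _ hz)
    omega
  have hmax : (((Finset.univ.erase (snk n)).max' hne : Fin (n + 2)) : ℕ) = n := by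
    have h1 : (⟨n, by omega⟩ : Fin (n + 2)) ∈ Finset.univ.erase (snk n) := by
      refine Finset.mem_erase.2 ⟨?_, Finset.mem_univ _⟩
      intro hh
      have := congrArg Fin.val hh
      simp only [snk] at this
      omega
    have h2 : n ≤ (((Finset.univ.erase (snk n)).max' hne : Fin (n + 2)) : ℕ) :=
      Fin.le_def.1 (Finset.le_max' _ _ h1)
    have h3 := hTn _ ((Finset.univ.erase (snk n)).max'_mem hne)
    omega
  rw [hcard, hmin, hmax, Lfull hk]
  omega

lemma snk_fix (x : Fin 3) : apAut n (snk n) x = snk n := by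
  have hk := kk_spec n
  have hx : x = 0 ∨ x = 1 ∨ x = 2 := by revert x; decide
  have hv : ((snk n : Fin (n + 2)) : ℕ) = n + 1 := rfl
  rcases hx with rfl | rfl | rfl
  · apply Fin.ext; rw [val_a, hv, if_neg (by omega)]
  · apply Fin.ext; rw [val_b, hv, if_neg (by omega)]
  · apply Fin.ext; rw [val_c, hv, if_neg (by omega)]

lemma act_snk (w : List (Fin 3)) : actW (apAut n) (snk n) w = snk n := by
  induction w with
  | nil => rfl
  | cons x w ih =>
    show actW (apAut n) (apAut n (snk n) x) w = snk n
    rw [snk_fix]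
    exact ih

lemma brep : ∀ (j : ℕ) (q : Fin (n + 2)), (q : ℕ) ≤ n →
    ((actW (apAut n) q (List.replicate j 1) : Fin (n + 2)) : ℕ) = (q : ℕ) - j := by
  intro j
  induction j with
  | zero => intro q hq; simp [actW]
  | succ j ih =>
    intro q hq
    rw [List.replicate_succ]
    show ((actW (apAut n) (apAut n q 1) (List.replicate j 1) : Fin (n + 2)) : ℕ) = _
    rw [ih _ (by rw [val_b]; split <;> omega), val_b]
    split <;> omega

lemma arep : ∀ (j : ℕ) (q : Fin (n + 2)), (q : ℕ) + j ≤ n →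
    ((actW (apAut n) q (List.replicate j 0) : Fin (n + 2)) : ℕ) = (q : ℕ) + j := by
  intro j
  induction j with
  | zero => intro q hq; simp [actW]
  | succ j ih =>
    intro q hq
    rw [List.replicate_succ]
    show ((actW (apAut n) (apAut n q 0) (List.replicate j 0) : Fin (n + 2)) : ℕ) = _
    rw [ih _ (by rw [val_a]; split <;> omega), val_a]
    split <;> omega

lemma actW_append (q : Fin (n + 2)) (u v : List (Fin 3)) :
    actW (apAut n) q (u ++ v) = actW (apAut n) (actW (apAut n) q u) v :=
  List.foldl_append

lemma upper_all (q : Fin (n + 2)) :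
    actW (apAut n) q (List.replicate n 1 ++ (List.replicate (kk n) 0 ++ [2])) = snk n := by
  have hk := kk_spec n
  by_cases hq : q = snk n
  · subst hq; exact act_snk n _
  · have hqn : (q : ℕ) ≤ n := by
      have h2 := q.isLt
      have h3 : (q : ℕ) ≠ n + 1 := fun hh => hq (Fin.ext hh)
      omega
    rw [actW_append, actW_append]
    have h1 : ((actW (apAut n) q (List.replicate n 1) : Fin (n + 2)) : ℕ) = 0 := by
      rw [brep n n q hqn]; omega
    have h2 : ((actW (apAut n) (actW (apAut n) q (List.replicate n 1))
        (List.replicate (kk n) 0) : Fin (n + 2)) : ℕ) = kk n := by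
      rw [arep n (kk n) _ (by omega), h1]
      omega
    show apAut n _ 2 = snk n
    apply Fin.ext
    rw [val_c, if_pos h2]
    rfl

end Assembly

end ApProof

/-- $\mathcal{A}_n$ is synchronizing with shortest reset length exactly
n' + ⌊n'/2⌋ - 2 where n' = n+2 is the number of states. -/
theorem apAut_reset_length (n : ℕ) :
    (∃ w : List (Fin 3), (img (apAut n) w).card = 1 ∧
      w.length = (n + 2) + (n + 2) / 2 - 2) ∧
    (∀ w : List (Fin 3), (img (apAut n) w).card = 1 →
      (n + 2) + (n + 2) / 2 - 2 ≤ w.length) := by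
  have hkdef : ApProof.kk n = (n + 2) / 2 - 1 := rfl
  have hk := ApProof.kk_spec n
  constructor
  · refine ⟨List.replicate n 1 ++ (List.replicate (ApProof.kk n) 0 ++ [2]), ?_, ?_⟩
    · have hconst : (fun q => actW (apAut n) q
          (List.replicate n 1 ++ (List.replicate (ApProof.kk n) 0 ++ [2]))) =
          (fun _ => ApProof.snk n) := funext (ApProof.upper_all n)
      rw [img, hconst, Finset.image_const Finset.univ_nonempty]
      exact Finset.card_singleton _
    · simp only [List.length_append, List.length_replicate, List.length_cons,
        List.length_nil]
      omega
  · intro w hw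
    have hsnkmem : ApProof.snk n ∈ img (apAut n) w :=
      Finset.mem_image.2 ⟨_, Finset.mem_univ _, ApProof.act_snk n w⟩
    obtain ⟨x, hx⟩ := Finset.card_eq_one.1 hw
    have hxs : x = ApProof.snk n := by
      rw [hx] at hsnkmem
      exact (Finset.mem_singleton.1 hsnkmem).symm
    subst hxs
    have hall : ∀ q : Fin (n + 2), actW (apAut n) q w = ApProof.snk n := by
      intro q
      have hmem : actW (apAut n) q w ∈ img (apAut n) w :=
        Finset.mem_image.2 ⟨q, Finset.mem_univ _, rfl⟩
      rw [hx] at hmem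
      exact Finset.mem_singleton.1 hmem
    have hkey := ApProof.key n w Finset.univ (fun q _ => hall q)
    rw [ApProof.phi_univ] at hkey
    omega
end

section
/- The automaton A_n (as defined) is aperiodic: no word over {a,b,c} induces a transformation of the state set containing a cycle of length at least 2. -/
/-- A transformation is `Good` if it fixes the top state and is monotone up to
jumps to the top state. -/
def Good (n : ℕ) (t : Fin (n + 2) → Fin (n + 2)) : Prop :=
  t (Fin.last (n + 1)) = Fin.last (n + 1) ∧
  ∀ q q' : Fin (n + 2), q < q' → t q ≤ t q' ∨ t q = Fin.last (n + 1)

lemma good_letter (n : ℕ) (x : Fin 3) : Good n (fun q => apAut n q x) := by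
  constructor
  · show apAut n (Fin.last (n + 1)) x = Fin.last (n + 1)
    simp only [apAut, Fin.val_last]
    split_ifs <;> first | rfl | omega
  · intro q q' hlt
    show apAut n q x ≤ apAut n q' x ∨ apAut n q x = Fin.last (n + 1)
    simp only [apAut]
    split_ifs <;>
      first
      | (left; simp only [Fin.le_def, Fin.lt_def, Fin.val_last] at *; all_goals omega)
      | (right; simp only [Fin.ext_iff, Fin.lt_def, Fin.val_last] at *; all_goals omega)

lemma good_comp (n : ℕ) (t s : Fin (n + 2) → Fin (n + 2))
    (ht : Good n t) (hs : Good n s) : Good n (fun q => s (t q)) := by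
  obtain ⟨ht1, ht2⟩ := ht
  obtain ⟨hs1, hs2⟩ := hs
  refine ⟨?_, ?_⟩
  · show s (t (Fin.last (n + 1))) = Fin.last (n + 1)
    rw [ht1, hs1]
  · intro q q' hlt
    show s (t q) ≤ s (t q') ∨ s (t q) = Fin.last (n + 1)
    rcases ht2 q q' hlt with h | h
    · rcases lt_or_eq_of_le h with h' | h'
      · rcases hs2 _ _ h' with h'' | h''
        · exact Or.inl h''
        · exact Or.inr h''
      · exact Or.inl (le_of_eq (congrArg s h'))
    · exact Or.inr (by rw [h, hs1])

lemma good_word (n : ℕ) (w : List (Fin 3)) :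
    Good n (fun q => actW (apAut n) q w) := by
  induction w using List.reverseRecOn with
  | nil => exact ⟨rfl, fun q q' h => Or.inl (le_of_lt h)⟩
  | append_singleton w x ih =>
      have : (fun q => actW (apAut n) q (w ++ [x])) =
          (fun q => apAut n (actW (apAut n) q w) x) := by
        funext q
        simp [actW, List.foldl_append]
      rw [this]
      exact good_comp n _ _ ih (good_letter n x)

/-- A `Good` map has no nontrivial cycles. -/
lemma good_no_cycle (n : ℕ) (t : Fin (n + 2) → Fin (n + 2)) (ht : Good n t)
    (x : Fin (n + 2)) (p : ℕ) (hp : 1 ≤ p) (hx : t^[p] x = x) : t x = x := by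
  obtain ⟨htop, hmono⟩ := ht
  set O : Finset (Fin (n + 2)) := (Finset.range p).image (fun i => t^[i] x) with hO
  have hxO : x ∈ O :=
    Finset.mem_image.2 ⟨0, Finset.mem_range.2 (by omega), rfl⟩
  have hne : O.Nonempty := ⟨x, hxO⟩
  have htO : ∀ y ∈ O, t y ∈ O := by
    intro y hy
    obtain ⟨i, hi, rfl⟩ := Finset.mem_image.1 hy
    rw [Finset.mem_range] at hi
    have h1 : t (t^[i] x) = t^[i + 1] x := (Function.iterate_succ_apply' t i x).symm
    rw [h1]
    by_cases h : i + 1 < p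
    · exact Finset.mem_image.2 ⟨i + 1, Finset.mem_range.2 h, rfl⟩
    · have : i + 1 = p := by omega
      rw [this, hx]; exact hxO
  by_cases htopO : Fin.last (n + 1) ∈ O
  · obtain ⟨i, hi, hieq⟩ := Finset.mem_image.1 htopO
    rw [Finset.mem_range] at hi
    have htopfix : ∀ k, t^[k] (Fin.last (n + 1)) = Fin.last (n + 1) :=
      fun k => Function.iterate_fixed htop k
    have hxtop : x = Fin.last (n + 1) := by
      have h1 : t^[p - i] (t^[i] x) = t^[p] x := by
        rw [← Function.iterate_add_apply]; congr 1; omega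
      rw [hieq, htopfix] at h1
      rw [← hx, ← h1]
    rw [hxtop, htop]
  · set x₀ := O.min' hne with hx₀
    have hx₀O : x₀ ∈ O := O.min'_mem hne
    have htx₀O : t x₀ ∈ O := htO _ hx₀O
    have htx₀ne : t x₀ ≠ Fin.last (n + 1) := fun h => htopO (h ▸ htx₀O)
    have hle : ∀ y ∈ O, t x₀ ≤ t y := by
      intro y hy
      rcases eq_or_lt_of_le (O.min'_le y hy) with h | h
      · exact le_of_eq (congrArg t (hx₀.trans h))
      · rcases hmono _ _ h with h' | h'
        · exact h'
        · exact absurd h' htx₀ne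
    have hsurj : ∃ y ∈ O, t y = x₀ := by
      obtain ⟨i, hi, hieq⟩ := Finset.mem_image.1 hx₀O
      rw [Finset.mem_range] at hi
      rcases Nat.eq_zero_or_pos i with rfl | hi'
      · refine ⟨t^[p - 1] x, Finset.mem_image.2 ⟨p - 1, Finset.mem_range.2 (by omega), rfl⟩, ?_⟩
        have h5 : t^[(p - 1) + 1] x = t (t^[p - 1] x) := Function.iterate_succ_apply' t (p - 1) x
        have h6 : (p - 1) + 1 = p := by omega
        rw [← h5, h6, hx, ← hieq, Function.iterate_zero_apply]
      · refine ⟨t^[i - 1] x, Finset.mem_image.2 ⟨i - 1, Finset.mem_range.2 (by omega), rfl⟩, ?_⟩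
        have h5 : t^[(i - 1) + 1] x = t (t^[i - 1] x) := Function.iterate_succ_apply' t (i - 1) x
        have h6 : (i - 1) + 1 = i := by omega
        rw [← h5, h6, hieq]
    obtain ⟨y₀, hy₀O, hy₀⟩ := hsurj
    have h1 : t x₀ ≤ x₀ := hy₀ ▸ hle y₀ hy₀O
    have h2 : x₀ ≤ t x₀ := O.min'_le _ htx₀O
    have hfix : t x₀ = x₀ := le_antisymm h1 h2
    obtain ⟨i, hi, hieq⟩ := Finset.mem_image.1 hx₀O
    rw [Finset.mem_range] at hi
    have hxx₀ : x = x₀ := by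
      have h3 : t^[p - i] (t^[i] x) = t^[p] x := by
        rw [← Function.iterate_add_apply]; congr 1; omega
      rw [hieq, Function.iterate_fixed hfix] at h3
      rw [← hx, ← h3]
    rw [hxx₀, hfix]

/-- $\mathcal{A}_n$ is aperiodic: for every word w the induced transformation
t_w satisfies t_w^k = t_w^{k+1} for some k ≥ 1. -/
theorem apAut_aperiodic (n : ℕ) (w : List (Fin 3)) :
    ∃ k : ℕ, 1 ≤ k ∧
      (fun q => actW (apAut n) q w)^[k] = (fun q => actW (apAut n) q w)^[k + 1] := by
  set t := fun q => actW (apAut n) q w with htdef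
  have ht : Good n t := good_word n w
  refine ⟨n + 2, by omega, ?_⟩
  funext q
  have main : ∀ a b : ℕ, a < b → b ≤ n + 2 → t^[a] q = t^[b] q →
      t^[n + 2] q = t^[n + 2 + 1] q := by
    intro a b hab hb heq
    have hfix : t (t^[a] q) = t^[a] q := by
      apply good_no_cycle n t ht _ (b - a) (by omega)
      rw [← Function.iterate_add_apply]
      have : b - a + a = b := by omega
      rw [this, heq]
    have key : ∀ k, a ≤ k → t^[k] q = t^[a] q := by
      intro k hk
      have h1 : t^[k] q = t^[k - a] (t^[a] q) := by
        rw [← Function.iterate_add_apply]; congr 1; omega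
      rw [h1, Function.iterate_fixed hfix]
    rw [key (n + 2) (by omega), key (n + 2 + 1) (by omega)]
  have hcard : Fintype.card (Fin (n + 2)) < Fintype.card (Fin (n + 3)) := by simp
  obtain ⟨i, j, hij, heq⟩ :=
    Fintype.exists_ne_map_eq_of_card_lt (fun i : Fin (n + 3) => t^[(i : ℕ)] q) hcard
  have hij' : (i : ℕ) ≠ (j : ℕ) := fun h => hij (Fin.ext h)
  rcases lt_or_gt_of_ne hij' with h | h
  · exact main i j h (by omega) heq
  · exact main j i h (by omega) heq.symm
end

section
/- The Kari automaton K with 6 states has a word of rank 2 = 6 − 4, but no word of rank at most 2 has length at most 16; the shortest word of rank at most 2 has length 17. -/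
/-- The Kari automaton (0-indexed states).  `false` = a = (1 2 3)(4 5 6),
`true` = b with 3↦6, 5↦3, 6↦3 and fixing 1,2,4. -/
def kari : Fin 6 → Bool → Fin 6 := fun q x =>
  if x then ![0, 1, 5, 3, 2, 2] q else ![1, 2, 0, 4, 5, 3] q

/-- One-letter step on an image set. -/
def stepK (s : Finset (Fin 6)) (x : Bool) : Finset (Fin 6) :=
  s.image (fun q => kari q x)

/-- Set of images reachable by words of length ≤ n. -/
def reach : ℕ → Finset (Finset (Fin 6))
  | 0 => {Finset.univ}
  | n + 1 => reach n ∪ (reach n).image (fun s => stepK s false)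
      ∪ (reach n).image (fun s => stepK s true)

lemma img_concat (w : List Bool) (x : Bool) :
    img kari (w ++ [x]) = stepK (img kari w) x := by
  simp [img, stepK, actW, List.foldl_append, Finset.image_image]
  rfl

lemma reach_succ (n : ℕ) : reach n ⊆ reach (n + 1) := by
  intro s hs
  simp only [reach, Finset.mem_union]
  exact Or.inl (Or.inl hs)

lemma reach_mono {n m : ℕ} (h : n ≤ m) : reach n ⊆ reach m := by
  induction h with
  | refl => exact Finset.Subset.refl _
  | step _ ih => exact ih.trans (reach_succ _)

lemma img_mem_reach (w : List Bool) : img kari w ∈ reach w.length := by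
  induction w using List.reverseRecOn with
  | nil => simp [img, actW, reach]
  | append_singleton w x ih =>
    rw [img_concat]
    simp only [List.length_append, List.length_singleton, reach, Finset.mem_union]
    cases x
    · exact Or.inl (Or.inr (Finset.mem_image_of_mem _ ih))
    · exact Or.inr (Finset.mem_image_of_mem _ ih)

set_option maxRecDepth 100000 in
set_option maxHeartbeats 4000000 in
lemma reach16 : ∀ s ∈ reach 16, ¬ s.card ≤ 2 := by decide

def w17 : List Bool :=
  [true, false, false, true, false, true, false, false, true, false, false,
   true, false, true, false, false, true]

lemma w17_card : (img kari w17).card = 2 := by decide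

/-- Kari's counterexample: there is a word of rank 2 = 6-4, no word of rank ≤ 2
has length ≤ 16, and the shortest word of rank ≤ 2 has length 17. -/
theorem kari_rank_two :
    (∃ w : List Bool, (img kari w).card = 2) ∧
    (∀ w : List Bool, (img kari w).card ≤ 2 → 17 ≤ w.length) ∧
    (∃ w : List Bool, (img kari w).card ≤ 2 ∧ w.length = 17) := by
  refine ⟨⟨w17, w17_card⟩, ?_, ⟨w17, le_of_eq w17_card, rfl⟩⟩
  intro w hw
  by_contra h
  push_neg at h
  exact reach16 _ (reach_mono (by omega) (img_mem_reach w)) hw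
end

section
/- In the Černý automaton C_n, for any nonempty subset S of states, there is a word w with |Sw| = 1 of length at most (n−1)² − ⌈(n−|S|)/|S|⌉ · (2n − |S|·⌈n/|S|⌉ − 1), and for each size 1 ≤ k ≤ n there is a subset S of size k for which this bound is tight. -/
def cerny (n : ℕ) [NeZero n] : ZMod n → Bool → ZMod n := fun i x =>
  if x then (if i = 0 then 1 else i) else i + 1

/-- Cardoso's bound for synchronizing a subset of size k in an n-state automaton. -/
def cardosoBound (n k : ℕ) : ℤ :=
  ((n : ℤ) - 1) ^ 2 -
    ⌈(((n : ℚ) - (k : ℚ)) / (k : ℚ))⌉ *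
      (2 * (n : ℤ) - (k : ℤ) * ⌈((n : ℚ) / (k : ℚ))⌉ - 1)

namespace CernyAux

lemma mod2 {n : ℕ} (h0 : 0 < n) {a : ℕ} (h : a < 2*n) :
    a % n = if a < n then a else a - n := by
  split
  · exact Nat.mod_eq_of_lt ‹_›
  · rw [Nat.mod_eq_sub_mod (le_of_not_gt ‹_›), Nat.mod_eq_of_lt (by omega)]

variable {n : ℕ} [NeZero n]

lemma npos : 0 < n := Nat.pos_of_ne_zero (NeZero.ne n)

lemma cast_val (a : ZMod n) : ((a.val : ZMod n)) = a := by
  have := ZMod.natCast_val (R := ZMod n) a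
  rwa [ZMod.cast_id] at this

lemma val_sub' (x y : ZMod n) : (x - y).val = (x.val + (n - y.val)) % n := by
  have hy : y.val ≤ n := le_of_lt (ZMod.val_lt y)
  have : x - y = ((x.val + (n - y.val) : ℕ) : ZMod n) := by
    push_cast [Nat.cast_sub hy, ZMod.natCast_self, cast_val]
    ring
  rw [this, ZMod.val_natCast]

lemma val_neg' (y : ZMod n) : (-y).val = (n - y.val) % n := by
  have := val_sub' (0 : ZMod n) y
  simpa using this

/-- membership of `x` in the cyclic arc starting at `l` of length `len`. -/
abbrev arcMem (l x : ZMod n) (len : ℕ) : Prop := (x - l).val < len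

lemma arcMem_iff (l x : ZMod n) (len : ℕ) :
    arcMem l x len ↔ (x.val + (n - l.val)) % n < len := by
  rw [arcMem, val_sub']

/-- the cost of the arc (l, len). -/
def cost (l : ZMod n) (len : ℕ) : ℤ := (n:ℤ) * ((len:ℤ) - 2) + 1 + ((-l).val : ℤ)

def cands (S : Finset (ZMod n)) : Finset (ZMod n × ℕ) :=
  (Finset.univ ×ˢ Finset.Icc 1 n).filter fun p => ∀ x ∈ S, arcMem p.1 x p.2

lemma mem_cands {S : Finset (ZMod n)} {p : ZMod n × ℕ} :
    p ∈ cands S ↔ (1 ≤ p.2 ∧ p.2 ≤ n) ∧ ∀ x ∈ S, arcMem p.1 x p.2 := by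
  simp [cands, Finset.mem_filter, Finset.mem_Icc]

lemma cands_nonempty (S : Finset (ZMod n)) : (cands S).Nonempty := by
  refine ⟨(0, n), ?_⟩
  rw [mem_cands]
  exact ⟨⟨npos, le_rfl⟩, fun x _ => ZMod.val_lt _⟩

noncomputable def Phi (S : Finset (ZMod n)) : ℤ :=
  (cands S).inf' (cands_nonempty S) (fun p => cost p.1 p.2)

lemma Phi_le {S : Finset (ZMod n)} {l : ZMod n} {len : ℕ}
    (h1 : 1 ≤ len) (h2 : len ≤ n) (h : ∀ x ∈ S, arcMem l x len) :
    Phi S ≤ cost l len := by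
  have hm : (l, len) ∈ cands S := mem_cands.mpr ⟨⟨h1, h2⟩, h⟩
  have := Finset.inf'_le (s := cands S) (fun p => cost p.1 p.2) hm
  unfold Phi
  convert this using 2

lemma Phi_exists (S : Finset (ZMod n)) :
    ∃ l len, (1 ≤ len ∧ len ≤ n) ∧ (∀ x ∈ S, arcMem l x len) ∧ Phi S = cost l len := by
  obtain ⟨p, hp, he⟩ := Finset.exists_mem_eq_inf' (cands_nonempty S) (fun p => cost p.1 p.2)
  rw [mem_cands] at hp
  exact ⟨p.1, p.2, hp.1, hp.2, he⟩

lemma Phi_singleton (q : ZMod n) : Phi ({q} : Finset (ZMod n)) ≤ 0 := by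
  have h := Phi_le (S := {q}) (l := q) (len := 1) le_rfl npos
    (by intro x hx; simp at hx; subst hx; simp [arcMem])
  refine h.trans ?_
  have : ((-q).val : ℤ) ≤ (n:ℤ) - 1 := by
    have := ZMod.val_lt (-q); omega
  simp only [cost]; push_cast; omega

end CernyAux
namespace CernyAux
variable {n : ℕ} [NeZero n]

lemma val_one' (hn2 : 2 ≤ n) : (1 : ZMod n).val = 1 := by
  have : ((1:ℕ) : ZMod n).val = 1 % n := ZMod.val_natCast n 1
  simpa [Nat.mod_eq_of_lt (by omega : 1 < n)] using this

lemma val_pos_of_ne_zero {y : ZMod n} (hy : y ≠ 0) : 1 ≤ y.val :=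
  Nat.pos_of_ne_zero (fun h => hy ((ZMod.val_eq_zero y).mp h))

lemma val_pred (hn2 : 2 ≤ n) (y : ZMod n) (hy : y ≠ 0) : (y - 1).val = y.val - 1 := by
  have hpos : 1 ≤ y.val := val_pos_of_ne_zero hy
  have hlt := ZMod.val_lt y
  rw [val_sub', val_one' hn2, mod2 (by omega) (by omega)]
  split <;> omega

lemma step_a (S : Finset (ZMod n)) :
    Phi S ≤ Phi (S.image (· + 1)) + 1 := by
  obtain ⟨l, len, ⟨h1, h2⟩, hc, he⟩ := Phi_exists (S.image (· + 1))
  have hmem : ∀ x ∈ S, arcMem (l - 1) x len := by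
    intro x hx
    have heq : x - (l - 1) = (x + 1) - l := by ring
    unfold arcMem
    rw [heq]
    exact hc (x + 1) (Finset.mem_image_of_mem _ hx)
  have hle := Phi_le h1 h2 hmem
  refine hle.trans ?_
  rw [he]
  unfold cost
  have hnat : (-(l - 1)).val ≤ (-l).val + 1 := by
    have h3 : -(l - 1) = (-l) + 1 := by ring
    rw [h3, ZMod.val_add]
    have hv1 : (1 : ZMod n).val ≤ 1 := by
      have : ((1:ℕ) : ZMod n).val = 1 % n := ZMod.val_natCast n 1
      simp only [Nat.cast_one] at this
      rw [this]; exact Nat.mod_le 1 n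
    have := Nat.mod_le ((-l).val + (1:ZMod n).val) n
    omega
  have : ((-(l - 1)).val : ℤ) ≤ ((-l).val : ℤ) + 1 := by exact_mod_cast hnat
  omega

lemma step_b (hn2 : 2 ≤ n) (S : Finset (ZMod n)) :
    Phi S ≤ Phi (S.image (fun i => if i = 0 then 1 else i)) + 1 := by
  set b : ZMod n → ZMod n := fun i => if i = 0 then 1 else i with hb
  obtain ⟨l, len, ⟨h1, h2⟩, hc, he⟩ := Phi_exists (S.image b)
  by_cases hS : ∀ x ∈ S, arcMem l x len
  · have := Phi_le h1 h2 hS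
    omega
  · simp only [not_forall, _root_.not_imp] at hS
    obtain ⟨s, hs, hns⟩ := hS
    have hs0 : s = 0 := by
      by_contra h
      exact hns (by simpa [hb, h] using hc (b s) (Finset.mem_image_of_mem _ hs))
    subst hs0
    have h1arc : arcMem l 1 len := by simpa [hb] using hc (b 0) (Finset.mem_image_of_mem _ hs)
    have hl1 : l = 1 := by
      by_contra h
      have hne : (1 : ZMod n) - l ≠ 0 := fun hh => h (sub_eq_zero.mp hh).symm
      have hvp := val_pred hn2 (1 - l) hne
      have heq : (0 : ZMod n) - l = (1 - l) - 1 := by ring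
      unfold arcMem at hns h1arc
      rw [heq, hvp] at hns
      omega
    subst hl1
    have hlen : len < n := by
      by_contra h
      exact hns (by unfold arcMem; have := ZMod.val_lt ((0:ZMod n) - 1); omega)
    have hmem : ∀ x ∈ S, arcMem 0 x (len + 1) := by
      intro x hx
      by_cases hx0 : x = 0
      · subst hx0; unfold arcMem; simp
      · have harc : arcMem 1 x len := by
          simpa [hb, hx0] using hc (b x) (Finset.mem_image_of_mem _ hx)
        unfold arcMem at harc ⊢
        have hvp := val_pred hn2 x hx0
        have hvpos : 1 ≤ x.val := val_pos_of_ne_zero hx0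
        simp only [sub_zero]
        omega
    have hle := Phi_le (by omega) (by omega) hmem
    refine hle.trans ?_
    rw [he]
    have hneg1 : (-(1:ZMod n)).val = n - 1 := by
      rw [val_neg', val_one' hn2, mod2 (by omega) (by omega)]
      split <;> omega
    have hceq : cost (0:ZMod n) (len+1) = cost (1:ZMod n) len + 1 := by
      unfold cost
      rw [hneg1, neg_zero, ZMod.val_zero]
      have hcast : ((n - 1 : ℕ) : ℤ) = (n:ℤ) - 1 := by omega
      rw [hcast]
      push_cast
      ring
    omega

lemma lower (hn2 : 2 ≤ n) :
    ∀ (w : List Bool) (S : Finset (ZMod n)),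
      (S.image fun q => actW (cerny n) q w).card = 1 → Phi S ≤ w.length := by
  intro w
  induction w with
  | nil =>
    intro S hS
    simp only [actW, List.foldl_nil] at hS
    rw [Finset.image_id'] at hS
    obtain ⟨q, hq⟩ := Finset.card_eq_one.mp hS
    subst hq
    simpa using Phi_singleton q
  | cons x w ih =>
    intro S hS
    have himg : (S.image fun q => actW (cerny n) q (x :: w))
        = ((S.image fun q => cerny n q x).image fun q => actW (cerny n) q w) := by
      rw [Finset.image_image]
      rfl
    rw [himg] at hS
    have hih := ih _ hS
    have hstep : Phi S ≤ Phi (S.image fun q => cerny n q x) + 1 := by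
      cases x with
      | false =>
        have hf : (fun q : ZMod n => cerny n q false) = (· + 1) := by
          funext q; simp [cerny]
        rw [hf]
        exact step_a S
      | true =>
        have hf : (fun q : ZMod n => cerny n q true) = (fun i => if i = 0 then 1 else i) := by
          funext q; simp [cerny]
        rw [hf]
        exact step_b hn2 S
    simp only [List.length_cons]
    push_cast
    omega

end CernyAux
namespace CernyAux

/-- building block word: `b (a^{n-1} b)^m`. -/
def wb (n : ℕ) : ℕ → List Bool
  | 0 => [true]
  | (m+1) => true :: (List.replicate (n-1) false ++ wb n m)

lemma wb_length (n : ℕ) (hn : 1 ≤ n) (m : ℕ) : (wb n m).length = 1 + m * n := by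
  induction m with
  | zero => simp [wb]
  | succ m ih =>
    simp only [wb, List.length_cons, List.length_append, List.length_replicate, ih]
    have : (m+1) * n = m * n + n := by ring
    omega

variable {n : ℕ} [NeZero n]

lemma actW_append (q : ZMod n) (u v : List Bool) :
    actW (cerny n) q (u ++ v) = actW (cerny n) (actW (cerny n) q u) v := by
  unfold actW
  rw [List.foldl_append]

lemma act_replicate_false (q : ZMod n) (j : ℕ) :
    actW (cerny n) q (List.replicate j false) = q + (j : ZMod n) := by
  induction j generalizing q with
  | zero => simp [actW]
  | succ j ih =>
    rw [List.replicate_succ]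
    have : actW (cerny n) q (false :: List.replicate j false)
        = actW (cerny n) (q + 1) (List.replicate j false) := by
      simp [actW, cerny]
    rw [this, ih]
    push_cast
    ring

lemma wb_sync (hn2 : 2 ≤ n) (m : ℕ) (hm : m + 1 ≤ n - 1) :
    ∀ x : ZMod n, x.val ≤ m + 1 → actW (cerny n) x (wb n m) = 1 := by
  induction m with
  | zero =>
    intro x hx
    have : actW (cerny n) x (wb n 0) = if x = 0 then 1 else x := by
      simp [wb, actW, cerny]
    rw [this]
    by_cases h : x = 0
    · simp [h]
    · have h1 : x.val = 1 := by
        have := val_pos_of_ne_zero h; omega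
      simp only [h, if_false]
      calc x = ((x.val : ℕ) : ZMod n) := (cast_val x).symm
        _ = 1 := by rw [h1]; simp
  | succ m ih =>
    intro x hx
    show actW (cerny n) x (true :: (List.replicate (n-1) false ++ wb n m)) = 1
    have hstep : actW (cerny n) x (true :: (List.replicate (n-1) false ++ wb n m))
        = actW (cerny n) (cerny n x true) (List.replicate (n-1) false ++ wb n m) := rfl
    rw [hstep, actW_append, act_replicate_false]
    set y : ZMod n := cerny n x true with hy
    have hyne : y ≠ 0 := by
      rw [hy]
      simp only [cerny, if_true]
      split
      · rename_i hx0
        intro h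
        have hv := val_one' (n := n) hn2
        rw [h, ZMod.val_zero] at hv
        omega
      · assumption
    have hyval : y.val ≤ m + 2 := by
      rw [hy]
      simp only [cerny, if_true]
      split
      · rw [val_one' hn2]; omega
      · omega
    have hcast : ((n - 1 : ℕ) : ZMod n) = -1 := by
      have : ((n:ℕ) : ZMod n) = 0 := ZMod.natCast_self n
      rw [Nat.cast_sub (by omega : 1 ≤ n), this]
      simp
    rw [hcast]
    have hyv : (y + -1) = y - 1 := by ring
    rw [hyv]
    apply ih (by omega)
    rw [val_pred hn2 y hyne]
    omega

/-- the word synchronizing the arc (l, len) to the state 1. -/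
def wordFor (l : ZMod n) (len : ℕ) : List Bool :=
  List.replicate ((-l).val) false ++ wb n (len - 2)

lemma wordFor_length (hn2 : 2 ≤ n) (l : ZMod n) (len : ℕ) (h2 : 2 ≤ len) :
    ((wordFor l len).length : ℤ) = cost l len := by
  unfold wordFor cost
  rw [List.length_append, List.length_replicate, wb_length n (by omega)]
  have : ((len - 2 : ℕ) : ℤ) = (len : ℤ) - 2 := by omega
  push_cast [this]
  ring

lemma wordFor_sync (hn2 : 2 ≤ n) (l : ZMod n) (len : ℕ) (h2 : 2 ≤ len) (hn : len ≤ n) :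
    ∀ x : ZMod n, arcMem l x len → actW (cerny n) x (wordFor l len) = 1 := by
  intro x hx
  unfold wordFor
  rw [actW_append, act_replicate_false, cast_val]
  have hxy : x + -l = x - l := by ring
  rw [hxy]
  apply wb_sync hn2 (len - 2) (by omega)
  unfold arcMem at hx
  omega

lemma sync_card_one {S : Finset (ZMod n)} (hS : S.Nonempty) {w : List Bool}
    (h : ∀ x ∈ S, actW (cerny n) x w = 1) :
    (S.image fun q => actW (cerny n) q w).card = 1 := by
  have himg : (S.image fun q => actW (cerny n) q w) = {1} := by
    refine Finset.Nonempty.subset_singleton_iff (hS.image _) |>.mp ?_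
    intro y hy
    obtain ⟨x, hx, hxy⟩ := Finset.mem_image.mp hy
    subst hxy
    exact Finset.mem_singleton.mpr (h x hx)
  rw [himg, Finset.card_singleton]

end CernyAux
namespace CernyAux

/-- ceiling of n/k -/
def cdiv (n k : ℕ) : ℕ := (n + k - 1) / k

lemma cdiv_spec {n k : ℕ} (hk : 1 ≤ k) (hkn : k ≤ n) :
    1 ≤ cdiv n k ∧ n ≤ k * cdiv n k ∧ k * cdiv n k ≤ n + k - 1 := by
  set c := cdiv n k with hc
  have h1 : c * k ≤ n + k - 1 := Nat.div_mul_le_self (n + k - 1) k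
  have h2 : n + k - 1 < k * (c + 1) := Nat.lt_mul_div_succ (n + k - 1) (by omega)
  have h3 : k * (c + 1) = k * c + k := by ring
  have h4 : c * k = k * c := by ring
  rw [h4] at h1
  rw [h3] at h2
  constructor
  · rcases Nat.eq_zero_or_pos c with h | h
    · rw [h] at h1 h2; omega
    · omega
  · omega

lemma ceil_div_eq {n k : ℕ} (hk : 1 ≤ k) (hkn : k ≤ n) :
    ⌈((n : ℚ) / (k : ℚ))⌉ = (cdiv n k : ℤ) := by
  obtain ⟨hc1, hc2, hc3⟩ := cdiv_spec hk hkn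
  set c := cdiv n k
  rw [Int.ceil_eq_iff]
  have hkQ : (0:ℚ) < (k:ℚ) := by exact_mod_cast hk
  have hq1 : (k:ℚ) * c + 1 ≤ (n:ℚ) + k := by exact_mod_cast (by omega : k * c + 1 ≤ n + k)
  have hq2 : (n:ℚ) ≤ (k:ℚ) * c := by exact_mod_cast hc2
  constructor
  · rw [lt_div_iff₀ hkQ]
    push_cast
    nlinarith
  · rw [div_le_iff₀ hkQ]
    push_cast
    nlinarith

lemma cardoso_eq {n k : ℕ} (hk : 1 ≤ k) (hkn : k ≤ n) :
    cardosoBound n k =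
      (n:ℤ) * ((n:ℤ) - (cdiv n k : ℤ)) - ((n - k * (cdiv n k - 1) : ℕ) - 1 : ℤ) * (cdiv n k : ℤ) := by
  obtain ⟨hc1, hc2, hc3⟩ := cdiv_spec hk hkn
  set c := cdiv n k with hcdef
  set r : ℕ := n - k * (c - 1) with hrdef
  have hkc : k * (c - 1) + k = k * c := by
    have h : c - 1 + 1 = c := by omega
    calc k * (c-1) + k = k * ((c-1)+1) := by ring
      _ = k * c := by rw [h]
  have hnr : n = k * (c - 1) + r := by omega
  have hr1 : 1 ≤ r := by omega
  have hc1' : ((c - 1 : ℕ) : ℤ) = (c:ℤ) - 1 := by omega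
  have hceil1 : ⌈((n : ℚ) / (k : ℚ))⌉ = (c : ℤ) := ceil_div_eq hk hkn
  have hceil2 : ⌈(((n : ℚ) - (k:ℚ)) / (k : ℚ))⌉ = (c : ℤ) - 1 := by
    have hkQ : (k:ℚ) ≠ 0 := by positivity
    have hsub : ((n : ℚ) - (k:ℚ)) / (k : ℚ) = (n:ℚ)/(k:ℚ) - 1 := by
      field_simp
    rw [hsub]
    rw [show ((1:ℚ) = ((1:ℤ):ℚ)) by norm_cast, Int.ceil_sub_intCast, hceil1]
  unfold cardosoBound
  rw [hceil1, hceil2]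
  have hcast : ((r:ℕ) : ℤ) - 1 = (r:ℤ) - 1 := by norm_num
  have hnZ : (n:ℤ) = (k:ℤ) * ((c:ℤ) - 1) + (r:ℤ) := by
    have h5 : ((k * (c - 1) + r : ℕ) : ℤ) = (k:ℤ) * ((c:ℤ) - 1) + (r:ℤ) := by
      push_cast [hc1']
      ring
    rw [← h5]
    exact_mod_cast congrArg (Nat.cast : ℕ → ℤ) hnr
  have key : ∀ (K C R : ℤ), ((K*(C-1)+R)-1)^2 - (C-1)*(2*(K*(C-1)+R) - K*C - 1)
      = (K*(C-1)+R)*((K*(C-1)+R)-C) - (R-1)*C := by intros; ring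
  have := key (k:ℤ) (c:ℤ) (r:ℤ)
  rw [← hnZ] at this
  rw [this]

set_option maxHeartbeats 1000000 in
lemma claimB (n k c r : ℕ) (hr1 : 1 ≤ r) (hrk : r ≤ k) (hc : 1 ≤ c)
    (hn : n = k * (c - 1) + r) (A G : ℕ → ℤ)
    (hmono : ∀ i j, i < j → j < k → A i < A j)
    (hlb : 1 ≤ A 0) (hub : A (k - 1) ≤ (n : ℤ))
    (hG0 : G 0 = (n : ℤ) + A 0 - A (k - 1))
    (hGi : ∀ i, 1 ≤ i → i < k → G i = A i - A (i - 1))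
    (hbad : ∀ i, i < k → (n:ℤ) * G i + A i ≤ (c:ℤ) * ((n:ℤ) + (r:ℤ) - 1)) : False := by
  have hk1 : 1 ≤ k := le_trans hr1 hrk
  have hkc : k * (c - 1) + k = k * c := by
    have h : c - 1 + 1 = c := by omega
    calc k * (c-1) + k = k * ((c-1)+1) := by ring
      _ = k * c := by rw [h]
  have hcrn : (c:ℤ) * (r:ℤ) ≤ (n:ℤ) := by
    have : c * r ≤ n := by
      have h1 : r * (c - 1) ≤ k * (c - 1) := Nat.mul_le_mul_right _ hrk
      have h2 : r * (c - 1) + r = r * c := by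
        have h : c - 1 + 1 = c := by omega
        calc r * (c-1) + r = r * ((c-1)+1) := by ring
          _ = r * c := by rw [h]
      have : r * c ≤ k * (c-1) + r := by omega
      calc c * r = r * c := by ring
        _ ≤ k * (c-1) + r := this
        _ = n := hn.symm
    exact_mod_cast this
  have hApos : ∀ i, i < k → 1 ≤ A i := by
    intro i hi
    rcases Nat.eq_zero_or_pos i with h | h
    · rw [h]; exact hlb
    · exact le_trans hlb (le_of_lt (hmono 0 i h hi))
  have hnpos : (1:ℤ) ≤ (n:ℤ) := by exact_mod_cast (by omega : 1 ≤ n)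
  -- every gap is at most c
  have hg_le : ∀ i, i < k → G i ≤ (c:ℤ) := by
    intro i hi
    by_contra h
    push_neg at h
    have h1 : (c:ℤ) + 1 ≤ G i := h
    have h2 : (n:ℤ) * ((c:ℤ)+1) ≤ (n:ℤ) * G i := by
      apply mul_le_mul_of_nonneg_left h1 (by linarith)
    have h3 := hbad i hi
    have h4 := hApos i hi
    nlinarith
  have hgc : ∀ i, i < k → (c:ℤ) ≤ G i → A i ≤ (c:ℤ) * ((r:ℤ) - 1) := by
    intro i hi hci
    have h3 := hbad i hi
    have h2 : (n:ℤ) * (c:ℤ) ≤ (n:ℤ) * G i := mul_le_mul_of_nonneg_left hci (by linarith)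
    nlinarith
  -- sum of gaps is n
  have hsum : ∑ i ∈ Finset.range k, G i = (n:ℤ) := by
    have hsplit : ∑ i ∈ Finset.range ((k-1)+1), G i
        = (∑ i ∈ Finset.range (k-1), G (i+1)) + G 0 := Finset.sum_range_succ' G (k-1)
    have hk' : (k-1)+1 = k := by omega
    rw [hk'] at hsplit
    have hcongr : ∑ i ∈ Finset.range (k-1), G (i+1)
        = ∑ i ∈ Finset.range (k-1), (A (i+1) - A i) := by
      apply Finset.sum_congr rfl
      intro i hi
      rw [Finset.mem_range] at hi
      rw [hGi (i+1) (by omega) (by omega)]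
      simp
    rw [hcongr, Finset.sum_range_sub A (k-1)] at hsplit
    rw [hsplit, hG0]
    ring
  -- the set of indices with gap exactly c
  set T : Finset ℕ := (Finset.range k).filter (fun i => (c:ℤ) ≤ G i) with hT
  have hTsub : T ⊆ Finset.range k := Finset.filter_subset _ _
  have hTcard : (r:ℤ) ≤ (T.card : ℤ) := by
    have hsplit := Finset.sum_filter_add_sum_filter_not (Finset.range k)
      (fun i => (c:ℤ) ≤ G i) G
    have hb1 : ∑ i ∈ T, G i ≤ (T.card : ℤ) * (c:ℤ) := by
      apply Finset.sum_le_card_nsmul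
      intro i hi
      exact hg_le i (Finset.mem_range.mp (hTsub hi))
    have hb2 : ∑ i ∈ (Finset.range k).filter (fun i => ¬ (c:ℤ) ≤ G i), G i
        ≤ (((Finset.range k).filter (fun i => ¬ (c:ℤ) ≤ G i)).card : ℤ) * ((c:ℤ) - 1) := by
      apply Finset.sum_le_card_nsmul
      intro i hi
      rw [Finset.mem_filter] at hi
      have := hi.2
      push_neg at this
      omega
    have hcards : T.card + ((Finset.range k).filter (fun i => ¬ (c:ℤ) ≤ G i)).card = k := by
      have := Finset.card_filter_add_card_filter_not
        (s := Finset.range k) (p := fun i => (c:ℤ) ≤ G i)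
      simpa using this
    have hnn : (n:ℤ) = (k:ℤ) * ((c:ℤ) - 1) + r := by
      have hcc : ((c - 1 : ℕ) : ℤ) = (c:ℤ) - 1 := by omega
      have h5 : ((k * (c - 1) + r : ℕ) : ℤ) = (k:ℤ) * ((c:ℤ) - 1) + (r:ℤ) := by
        push_cast [hcc]
        ring
      rw [← h5]
      exact_mod_cast congrArg (Nat.cast : ℕ → ℤ) hn
    have htu : (T.card : ℤ) + (((Finset.range k).filter (fun i => ¬ (c:ℤ) ≤ G i)).card : ℤ)
        = (k:ℤ) := by exact_mod_cast hcards
    have hfin : (n:ℤ) ≤ (T.card : ℤ) * c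
        + (((Finset.range k).filter (fun i => ¬ (c:ℤ) ≤ G i)).card : ℤ) * ((c:ℤ)-1) := by
      rw [← hsplit] at hsum
      rw [← hsum]
      exact add_le_add hb1 hb2
    nlinarith
  have hTne : T.Nonempty := by
    rw [← Finset.card_pos]
    omega
  set m := T.max' hTne with hm
  have hmT : m ∈ T := Finset.max'_mem T hTne
  have hmk : m < k := Finset.mem_range.mp (hTsub hmT)
  have hmax : ∀ i ∈ T, i ≤ m := fun i hi => Finset.le_max' T i hi
  have hAm : A m ≤ (c:ℤ) * ((r:ℤ) - 1) := by
    apply hgc m hmk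
    exact (Finset.mem_filter.mp hmT).2
  -- T' : shifted indices
  set T' : Finset ℕ := (Finset.range m).filter (fun j => (j+1) ∈ T) with hT'
  have hT'card : (T.card : ℤ) - 1 ≤ (T'.card : ℤ) := by
    have hinj : ∀ i ∈ T.erase 0, i - 1 ∈ T' := by
      intro i hi
      obtain ⟨hi0, hiT⟩ := Finset.mem_erase.mp hi
      have h1 : 1 ≤ i := Nat.pos_of_ne_zero hi0
      have h2 : i ≤ m := hmax i hiT
      rw [hT', Finset.mem_filter, Finset.mem_range]
      constructor
      · omega
      · have : i - 1 + 1 = i := by omega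
        rw [this]; exact hiT
    have hcard : (T.erase 0).card ≤ T'.card := by
      apply Finset.card_le_card_of_injOn (fun i => i - 1) hinj
      intro a ha b hb hab
      have ha1 : 1 ≤ a := Nat.pos_of_ne_zero (Finset.mem_erase.mp ha).1
      have hb1 : 1 ≤ b := Nat.pos_of_ne_zero (Finset.mem_erase.mp hb).1
      have hab' : a - 1 = b - 1 := hab
      omega
    have h2 : T.card - 1 ≤ (T.erase 0).card := Finset.pred_card_le_card_erase
    have h3 : T.card - 1 ≤ T'.card := le_trans h2 hcard
    omega
  have hmge : (m:ℤ) ≥ (T.card:ℤ) - 1 := by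
    have : T ⊆ Finset.range (m+1) := by
      intro i hi
      rw [Finset.mem_range]
      exact Nat.lt_succ_of_le (hmax i hi)
    have := Finset.card_le_card this
    simp only [Finset.card_range] at this
    have : T.card ≤ m + 1 := this
    exact_mod_cast (by omega : (T.card:ℤ) - 1 ≤ (m:ℤ))
  -- lower bound for A m
  have hAm_lb : A 0 + (m:ℤ) + ((c:ℤ)-1) * (T'.card:ℤ) ≤ A m := by
    have hAdiff : A m - A 0 = ∑ j ∈ Finset.range m, (A (j+1) - A j) :=
      (Finset.sum_range_sub A m).symm
    have hlower : ∀ j ∈ Finset.range m, (if (j+1) ∈ T then (c:ℤ) else 1) ≤ A (j+1) - A j := by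
      intro j hj
      rw [Finset.mem_range] at hj
      have hjk : j + 1 < k := by omega
      split
      · rename_i hjT
        have hGj : (c:ℤ) ≤ G (j+1) := (Finset.mem_filter.mp hjT).2
        rw [hGi (j+1) (by omega) hjk] at hGj
        simpa using hGj
      · have := hmono j (j+1) (by omega) hjk
        omega
    have hsum_lb : ∑ j ∈ Finset.range m, (if (j+1) ∈ T then (c:ℤ) else 1)
        ≤ ∑ j ∈ Finset.range m, (A (j+1) - A j) := Finset.sum_le_sum hlower
    have hsum_eval : ∑ j ∈ Finset.range m, (if (j+1) ∈ T then (c:ℤ) else 1)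
        = (T'.card : ℤ) * (c:ℤ) + ((m:ℤ) - (T'.card:ℤ)) * 1 := by
      rw [Finset.sum_ite]
      have h1 : ((Finset.range m).filter (fun j => (j+1) ∈ T)) = T' := rfl
      have h2 : ((Finset.range m).filter (fun j => ¬ (j+1) ∈ T)).card = m - T'.card := by
        have h4 := Finset.card_filter_add_card_filter_not
          (s := Finset.range m) (p := fun j => (j+1) ∈ T)
        simp only [Finset.card_range] at h4
        have h5 : T'.card + ((Finset.range m).filter (fun j => ¬ (j+1) ∈ T)).card = m := by
          rw [hT']
          simpa using h4
        omega
      rw [Finset.sum_const, Finset.sum_const, h1, h2]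
      have hT'le : T'.card ≤ m := by
        have := Finset.card_le_card (Finset.filter_subset (fun j => (j+1) ∈ T) (Finset.range m))
        simpa using this
      simp only [nsmul_eq_mul, mul_one]
      have hms : ((m - T'.card : ℕ) : ℤ) = (m:ℤ) - (T'.card:ℤ) := by omega
      rw [hms]
      try ring
    rw [hsum_eval] at hsum_lb
    rw [← hAdiff] at hsum_lb
    nlinarith
  -- contradiction
  have hTc : (r:ℤ) - 1 ≤ (T'.card:ℤ) := by omega
  have hc1 : (0:ℤ) ≤ (c:ℤ) - 1 := by
    have : (1:ℤ) ≤ (c:ℤ) := by exact_mod_cast hc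
    omega
  have : ((c:ℤ)-1) * ((r:ℤ)-1) ≤ ((c:ℤ)-1) * (T'.card:ℤ) := by
    apply mul_le_mul_of_nonneg_left hTc hc1
  nlinarith

end CernyAux
namespace CernyAux
variable {n : ℕ} [NeZero n]

/-- representative of a state in [1, n] -/
def rep (x : ZMod n) : ℕ := if x = 0 then n else x.val

lemma rep_le (x : ZMod n) : rep x ≤ n := by
  unfold rep
  split
  · exact le_rfl
  · exact le_of_lt (ZMod.val_lt x)

lemma rep_pos (x : ZMod n) : 1 ≤ rep x := by
  unfold rep
  split
  · exact Nat.pos_of_ne_zero (NeZero.ne n)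
  · exact val_pos_of_ne_zero ‹_›

lemma rep_cast (x : ZMod n) : ((rep x : ℕ) : ZMod n) = x := by
  unfold rep
  split
  · rw [ZMod.natCast_self]
    exact (‹x = 0›).symm
  · exact cast_val x

lemma rep_inj : Function.Injective (rep (n := n)) := by
  intro x y hxy
  have := congrArg (fun u => ((u : ℕ) : ZMod n)) hxy
  simpa [rep_cast] using this

lemma cast_sub_val {u v : ℕ} (hv1 : 1 ≤ v) (hv2 : v ≤ n) :
    (((u : ZMod n) - (v : ZMod n)).val) = (u + (n - v)) % n := by
  rw [val_sub', ZMod.val_natCast, ZMod.val_natCast]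
  rcases Nat.lt_or_ge v n with h | h
  · rw [Nat.mod_eq_of_lt h, Nat.mod_add_mod]
  · have hvn : v = n := by omega
    subst hvn
    rw [Nat.mod_self, Nat.sub_zero, Nat.sub_self, Nat.add_zero, Nat.mod_add_mod,
      Nat.add_mod_right]

lemma neg_cast_val {v : ℕ} (hv1 : 1 ≤ v) (hv2 : v ≤ n) :
    ((-(v : ZMod n)).val) = n - v := by
  have h := cast_sub_val (n := n) (u := 0) hv1 hv2
  simp only [Nat.cast_zero, zero_sub, Nat.zero_add] at h
  rw [h]
  rcases Nat.lt_or_ge v n with h2 | h2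
  · exact Nat.mod_eq_of_lt (by omega)
  · have hvn : v = n := by omega
    subst hvn
    simp

lemma sorted_enum (R : Finset ℕ) (k : ℕ) (hcard : R.card = k) :
    ∃ f : ℕ → ℕ, (∀ p q, p < q → q < k → f p < f q) ∧ (∀ i, i < k → f i ∈ R) ∧
      (∀ y ∈ R, ∃ i, i < k ∧ f i = y) := by
  set e := R.orderIsoOfFin hcard with hedef
  refine ⟨fun j => if h : j < k then ((e ⟨j, h⟩ : R) : ℕ) else 0, ?_, ?_, ?_⟩
  · intro p q hpq hq
    have hp : p < k := lt_trans hpq hq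
    simp only [dif_pos hp, dif_pos hq]
    have hlt : (⟨p, hp⟩ : Fin k) < ⟨q, hq⟩ := hpq
    exact e.strictMono hlt
  · intro i hi
    simp only [dif_pos hi]
    exact (e ⟨i, hi⟩).2
  · intro y hy
    refine ⟨(e.symm ⟨y, hy⟩ : Fin k), (e.symm ⟨y, hy⟩).2, ?_⟩
    simp only [dif_pos (e.symm ⟨y, hy⟩).2]
    have : e ⟨(e.symm ⟨y, hy⟩ : Fin k), (e.symm ⟨y, hy⟩).2⟩ = ⟨y, hy⟩ := by
      have h2 : (⟨(e.symm ⟨y, hy⟩ : Fin k), (e.symm ⟨y, hy⟩).2⟩ : Fin k) = e.symm ⟨y, hy⟩ := rfl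
      rw [h2]
      exact e.apply_symm_apply _
    rw [this]

lemma exists_good_arc (hn2 : 2 ≤ n) (S : Finset (ZMod n)) (hk2 : 2 ≤ S.card) :
    ∃ (l : ZMod n) (len : ℕ), 2 ≤ len ∧ len ≤ n ∧ (∀ x ∈ S, arcMem l x len) ∧
      cost l len ≤ cardosoBound n S.card := by
  set k := S.card with hkdef
  have hk1 : 1 ≤ k := by omega
  have hkn : k ≤ n := by
    have := Finset.card_le_card (Finset.subset_univ S)
    simpa [ZMod.card n] using this
  -- ceiling parameters
  set c := cdiv n k with hcdef
  obtain ⟨hc1, hc2, hc3⟩ := cdiv_spec hk1 hkn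
  rw [← hcdef] at hc1 hc2 hc3
  set r : ℕ := n - k * (c - 1) with hrdef
  have hkc : k * (c - 1) + k = k * c := by
    have h : c - 1 + 1 = c := by omega
    calc k * (c-1) + k = k * ((c-1)+1) := by ring
      _ = k * c := by rw [h]
  have hnr : n = k * (c - 1) + r := by omega
  have hr1 : 1 ≤ r := by omega
  have hrk : r ≤ k := by omega
  -- sorted enumeration of representatives
  have hRcard : (S.image rep).card = k := Finset.card_image_of_injective S rep_inj
  obtain ⟨f, hfmono, hfmem, hfsurj⟩ := sorted_enum (S.image rep) k hRcard
  have ha_le : ∀ i, i < k → f i ≤ n := by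
    intro i hi
    obtain ⟨x, _, hx⟩ := Finset.mem_image.mp (hfmem i hi)
    rw [← hx]; exact rep_le x
  have ha_pos : ∀ i, i < k → 1 ≤ f i := by
    intro i hi
    obtain ⟨x, _, hx⟩ := Finset.mem_image.mp (hfmem i hi)
    rw [← hx]; exact rep_pos x
  -- integer sequences
  set A : ℕ → ℤ := fun j => ((f (min j (k-1)) : ℕ) : ℤ) with hA
  have hAeq : ∀ (j : ℕ), j < k → A j = ((f j : ℕ) : ℤ) := by
    intro j hj
    have hm : min j (k-1) = j := by omega
    simp only [hA, hm]
  set G : ℕ → ℤ := fun i => if i = 0 then (n:ℤ) + A 0 - A (k-1) else A i - A (i-1) with hG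
  -- apply claimB to get a good index
  have hex : ∃ i, i < k ∧ (c:ℤ) * ((n:ℤ) + (r:ℤ) - 1) + 1 ≤ (n:ℤ) * G i + A i := by
    by_contra hcon
    push_neg at hcon
    apply claimB n k c r hr1 hrk hc1 hnr A G
    · intro i j hij hjk
      rw [hAeq i (lt_trans hij hjk), hAeq j hjk]
      exact_mod_cast hfmono i j hij hjk
    · rw [hAeq 0 (by omega)]
      exact_mod_cast ha_pos 0 (by omega)
    · rw [hAeq (k-1) (by omega)]
      exact_mod_cast ha_le (k-1) (by omega)
    · simp only [hG, if_pos rfl]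
    · intro i h1i hik
      simp only [hG, if_neg (by omega : ¬ i = 0)]
    · intro i hik
      have := hcon i hik
      omega
  obtain ⟨i, hik, hgood⟩ := hex
  -- name the relevant values
  set v : ℕ := f i with hv
  have hAv : A i = (v : ℤ) := hAeq i hik
  set gnat : ℕ := if i = 0 then n + f 0 - f (k-1) else f i - f (i-1) with hgnat
  have hfk1 : f (k-1) ≤ n := ha_le (k-1) (by omega)
  have hf0 : 1 ≤ f 0 := ha_pos 0 (by omega)
  have hf0k : f 0 < f (k-1) := hfmono 0 (k-1) (by omega) (by omega)
  have hGg : G i = (gnat : ℤ) := by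
    by_cases h0 : i = 0
    · subst h0
      simp only [hG, hgnat, if_pos rfl]
      rw [hAeq 0 (by omega), hAeq (k-1) (by omega)]
      push_cast
      omega
    · simp only [hG, hgnat, if_neg h0]
      rw [hAeq i hik, hAeq (i-1) (by omega)]
      have hlt := hfmono (i-1) i (by omega) hik
      push_cast
      omega
  have hg1 : 1 ≤ gnat := by
    rw [hgnat]
    by_cases h0 : i = 0
    · simp only [if_pos h0]
      omega
    · simp only [if_neg h0]
      have hlt := hfmono (i-1) i (by omega) hik
      omega
  have hgn : gnat ≤ n - 1 := by
    rw [hgnat]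
    by_cases h0 : i = 0
    · simp only [if_pos h0]
      omega
    · simp only [if_neg h0]
      have h3 : f i ≤ f (k-1) := by
        rcases Nat.lt_or_ge i (k-1) with h | h
        · exact le_of_lt (hfmono i (k-1) h (by omega))
        · have : i = k-1 := by omega
          subst this; exact le_rfl
      have h4 : f 0 ≤ f (i-1) := by
        rcases Nat.eq_zero_or_pos (i-1) with h | h
        · rw [h]
        · exact le_of_lt (hfmono 0 (i-1) h (by omega))
      omega
  -- the arc
  refine ⟨(v : ZMod n), n + 1 - gnat, by omega, by omega, ?_, ?_⟩
  · -- S is inside the arc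
    intro x hx
    have hxrep : rep x ∈ S.image rep := Finset.mem_image_of_mem rep hx
    obtain ⟨j, hjk, hj⟩ := hfsurj (rep x) hxrep
    have hxc : x = ((rep x : ℕ) : ZMod n) := (rep_cast x).symm
    unfold arcMem
    rw [hxc, cast_sub_val (ha_pos i hik) (ha_le i hik)]
    have hrx1 : 1 ≤ rep x := rep_pos x
    have hrxn : rep x ≤ n := rep_le x
    have hvn : v ≤ n := ha_le i hik
    have hv1 : 1 ≤ v := ha_pos i hik
    -- key ordering facts
    have hub' : rep x ≤ f (k-1) := by
      rw [← hj]
      rcases Nat.lt_or_ge j (k-1) with h | h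
      · exact le_of_lt (hfmono j (k-1) h (by omega))
      · have : j = k-1 := by omega
        rw [this]
    have hlb' : f 0 ≤ rep x := by
      rw [← hj]
      rcases Nat.eq_zero_or_pos j with h | h
      · rw [h]
      · exact le_of_lt (hfmono 0 j h hjk)
    have hpred : rep x < v → rep x ≤ f (i-1) := by
      intro hlt
      rw [← hj] at hlt ⊢
      have hji : j < i := by
        by_contra hcon
        push_neg at hcon
        rcases Nat.lt_or_ge i j with h | h
        · have := hfmono i j h hjk
          omega
        · have : j = i := by omega
          rw [this] at hlt
          omega
      rcases Nat.lt_or_ge j (i-1) with h | h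
      · exact le_of_lt (hfmono j (i-1) h (by omega))
      · have : j = i - 1 := by omega
        rw [this]
    -- now arithmetic
    rw [mod2 (by omega) (by omega)]
    by_cases h0 : i = 0
    · have hv0 : v = f 0 := by rw [hv, h0]
      have hg0 : gnat = n + f 0 - f (k-1) := by rw [hgnat, if_pos h0]
      split <;> omega
    · have hfi1 : 1 ≤ f (i-1) := ha_pos (i-1) (by omega)
      have hflt : f (i-1) < f i := hfmono (i-1) i (by omega) hik
      have hgg : gnat + f (i-1) = f i := by
        rw [hgnat, if_neg h0]
        omega
      have hvv : v = f i := hv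
      have hp2 : rep x < v → rep x ≤ f (i-1) := hpred
      by_cases hcase : rep x < v
      · have hle := hp2 hcase
        split <;> omega
      · split <;> omega
  · -- cost bound
    have hvn : v ≤ n := ha_le i hik
    have hv1 : 1 ≤ v := ha_pos i hik
    unfold cost
    rw [neg_cast_val hv1 hvn]
    rw [cardoso_eq hk1 hkn, ← hcdef, ← hrdef]
    rw [hGg, hAv] at hgood
    have hlen : ((n + 1 - gnat : ℕ) : ℤ) = (n:ℤ) + 1 - (gnat:ℤ) := by omega
    have hnv : ((n - v : ℕ) : ℤ) = (n:ℤ) - (v:ℤ) := by omega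
    rw [hlen, hnv]
    have hrz : ((n - k * (c-1) : ℕ) : ℤ) = (r:ℤ) := by rw [← hrdef]
    rw [hrz]
    nlinarith [hgood]

end CernyAux
namespace CernyAux

/-- positions of the extremal set: `i*(c-1) + min (i+1) r` for `i < k`. -/
def fstar (c r i : ℕ) : ℕ := i * (c - 1) + min (i + 1) r

section fstarFacts

variable {n k c r : ℕ}

lemma fstar_mono (hc : 1 ≤ c) (hrk : r ≤ k) (hn : n = k * (c-1) + r)
    (hkn : k ≤ n) : ∀ p q, p < q → q < k → fstar c r p < fstar c r q := by
  intro p q hpq hq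
  unfold fstar
  have h1 : p * (c-1) + (c-1) = (p+1) * (c-1) := by ring
  have h2 : (p+1) * (c-1) ≤ q * (c-1) := Nat.mul_le_mul_right _ (by omega)
  rcases Nat.lt_or_ge c 2 with hc2 | hc2
  · -- c = 1 : then r = n and k = n so k = r
    have hceq : c = 1 := by omega
    subst hceq
    simp only [Nat.sub_self, Nat.mul_zero, Nat.zero_add]
    have hkr : k = r := by omega
    omega
  · have h3 : min (p+1) r ≤ min (q+1) r := by omega
    omega

lemma fstar_pos (hr : 1 ≤ r) (i : ℕ) : 1 ≤ fstar c r i := by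
  unfold fstar
  omega

lemma fstar_last (hc : 1 ≤ c) (hr : 1 ≤ r) (hrk : r ≤ k) (hk : 1 ≤ k)
    (hn : n = k * (c-1) + r) : fstar c r (k-1) + (c-1) = n := by
  unfold fstar
  have h1 : min ((k-1)+1) r = r := by omega
  rw [h1]
  have h2 : (k-1) * (c-1) + (c-1) = k * (c-1) := by
    have : (k-1) * (c-1) + (c-1) = ((k-1)+1) * (c-1) := by ring
    rw [this]
    congr 1
    omega
  omega

lemma fstar_le (hc : 1 ≤ c) (hr : 1 ≤ r) (hrk : r ≤ k) (hk : 1 ≤ k)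
    (hn : n = k * (c-1) + r) (hkn : k ≤ n) : ∀ i, i < k → fstar c r i ≤ n - (c-1) := by
  intro i hi
  have hlast := fstar_last (n := n) hc hr hrk hk hn
  rcases Nat.lt_or_ge i (k-1) with h | h
  · have := fstar_mono (n := n) hc hrk hn hkn i (k-1) h (by omega)
    omega
  · have : i = k - 1 := by omega
    subst this
    omega

lemma fstar_small (hc : 1 ≤ c) (i : ℕ) (hir : i + 1 ≤ r) : fstar c r i = i * c + 1 := by
  unfold fstar
  have h1 : min (i+1) r = i+1 := by omega
  rw [h1]
  have h2 : i * (c-1) + i = i * c := by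
    have : i * (c-1) + i = i * ((c-1) + 1) := by ring
    rw [this]
    congr 1
    omega
  omega

lemma fstar_big (i : ℕ) (hir : r ≤ i + 1) : fstar c r i = i * (c-1) + r := by
  unfold fstar
  have h1 : min (i+1) r = r := by omega
  rw [h1]

end fstarFacts

variable {n : ℕ} [NeZero n]

lemma cast_inj_on_reps {u v : ℕ} (hu1 : 1 ≤ u) (hun : u ≤ n) (hv1 : 1 ≤ v) (hvn : v ≤ n)
    (h : (u : ZMod n) = (v : ZMod n)) : u = v := by
  have := congrArg ZMod.val h
  rw [ZMod.val_natCast, ZMod.val_natCast] at this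
  rcases Nat.lt_or_ge u n with hu | hu <;> rcases Nat.lt_or_ge v n with hv | hv
  · rwa [Nat.mod_eq_of_lt hu, Nat.mod_eq_of_lt hv] at this
  · have hv' : v = n := by omega
    rw [hv', Nat.mod_self, Nat.mod_eq_of_lt hu] at this
    omega
  · have hu' : u = n := by omega
    rw [hu', Nat.mod_self, Nat.mod_eq_of_lt hv] at this
    omega
  · omega

/-- the extremal subset of size k. -/
def Sstar (n k c r : ℕ) [NeZero n] : Finset (ZMod n) :=
  (Finset.range k).image (fun i => ((fstar c r i : ℕ) : ZMod n))

lemma arc_dist (u : ℕ) (hu1 : 1 ≤ u) (hun : u ≤ n) (l : ZMod n) :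
    ((u : ZMod n) - l).val = ((u - 1) + ((1:ZMod n) - l).val) % n := by
  have heq : (u : ZMod n) - l = ((u - 1 : ℕ) : ZMod n) + ((1:ZMod n) - l) := by
    push_cast [Nat.cast_sub hu1]
    ring
  rw [heq, ZMod.val_add, ZMod.val_natCast, Nat.mod_eq_of_lt (by omega : u - 1 < n)]

end CernyAux
namespace CernyAux
variable {n : ℕ} [NeZero n]

section SstarFacts

variable {k c r : ℕ}

-- standing hypotheses bundled as explicit arguments
lemma Sstar_card (hc : 1 ≤ c) (hr : 1 ≤ r) (hrk : r ≤ k) (hk : 1 ≤ k)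
    (hn : n = k * (c-1) + r) (hkn : k ≤ n) :
    (Sstar n k c r).card = k := by
  unfold Sstar
  rw [Finset.card_image_of_injOn, Finset.card_range]
  intro i hi j hj hij
  rw [Finset.mem_coe, Finset.mem_range] at hi hj
  have hbi := fstar_le (n := n) hc hr hrk hk hn hkn i hi
  have hbj := fstar_le (n := n) hc hr hrk hk hn hkn j hj
  have heq : fstar c r i = fstar c r j :=
    cast_inj_on_reps (fstar_pos hr i) (by omega) (fstar_pos hr j) (by omega) hij
  by_contra hne
  rcases Nat.lt_or_ge i j with h | h
  · have := fstar_mono (n := n) hc hrk hn hkn i j h hj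
    omega
  · have hji : j < i := by omega
    have := fstar_mono (n := n) hc hrk hn hkn j i hji hi
    omega

lemma Sstar_nonempty (hk : 1 ≤ k) : (Sstar n k c r).Nonempty := by
  refine ⟨((fstar c r 0 : ℕ) : ZMod n), ?_⟩
  unfold Sstar
  exact Finset.mem_image_of_mem _ (Finset.mem_range.mpr (by omega))

lemma Sstar_arc (hn2 : 2 ≤ n) (hc : 1 ≤ c) (hcn : c ≤ n - 1) (hr : 1 ≤ r) (hrk : r ≤ k)
    (hk : 1 ≤ k) (hn : n = k * (c-1) + r) (hkn : k ≤ n) :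
    ∀ x ∈ Sstar n k c r, arcMem ((fstar c r (r-1) : ℕ) : ZMod n) x (n + 1 - c) := by
  intro x hx
  obtain ⟨i, hi, hix⟩ := Finset.mem_image.mp hx
  rw [Finset.mem_range] at hi
  subst hix
  have hrk' : r - 1 < k := by omega
  have hv1 : 1 ≤ fstar c r (r-1) := fstar_pos hr _
  have hvn : fstar c r (r-1) ≤ n := le_trans (fstar_le (n := n) hc hr hrk hk hn hkn _ hrk') (by omega)
  have hu1 : 1 ≤ fstar c r i := fstar_pos hr _
  have hun : fstar c r i ≤ n - (c-1) := fstar_le (n := n) hc hr hrk hk hn hkn i hi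
  have hvsmall : fstar c r (r-1) = (r-1) * c + 1 := fstar_small hc (r-1) (by omega)
  unfold arcMem
  rw [cast_sub_val hv1 hvn, mod2 (by omega) (by omega)]
  rcases Nat.lt_or_ge i (r-1) with hcase | hcase
  · -- small index : value wraps with distance at least c
    have husmall : fstar c r i = i * c + 1 := fstar_small hc i (by omega)
    have hprod : (i+1) * c ≤ (r-1) * c := Nat.mul_le_mul_right _ (by omega)
    have hprod2 : (i+1) * c = i * c + c := by ring
    split <;> omega
  · -- large index : above the start
    have huge : fstar c r (r-1) ≤ fstar c r i := by
      rcases Nat.lt_or_ge (r-1) i with h | h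
      · exact le_of_lt (fstar_mono (n := n) hc hrk hn hkn (r-1) i h hi)
      · have : i = r-1 := by omega
        rw [this]
    split <;> omega

lemma Sstar_cost (hn2 : 2 ≤ n) (hc : 1 ≤ c) (hcn : c ≤ n - 1) (hr : 1 ≤ r) (hrk : r ≤ k)
    (hk : 1 ≤ k) (hn : n = k * (c-1) + r) (hkn : k ≤ n) :
    cost ((fstar c r (r-1) : ℕ) : ZMod n) (n + 1 - c)
      = (n:ℤ) * ((n:ℤ) - (c:ℤ)) - ((r:ℤ) - 1) * (c:ℤ) := by
  have hrk' : r - 1 < k := by omega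
  have hv1 : 1 ≤ fstar c r (r-1) := fstar_pos hr _
  have hvn : fstar c r (r-1) ≤ n :=
    le_trans (fstar_le (n := n) hc hr hrk hk hn hkn _ hrk') (by omega)
  have hvsmall : fstar c r (r-1) = (r-1) * c + 1 := fstar_small hc (r-1) (by omega)
  unfold cost
  rw [neg_cast_val hv1 hvn]
  have h1 : ((n + 1 - c : ℕ) : ℤ) = (n:ℤ) + 1 - (c:ℤ) := by omega
  rw [h1]
  have h2 : ((n - fstar c r (r-1) : ℕ) : ℤ) = (n:ℤ) - ((fstar c r (r-1) : ℕ) : ℤ) := by omega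
  rw [h2]
  have h3 : ((fstar c r (r-1) : ℕ) : ℤ) = ((r:ℤ) - 1) * (c:ℤ) + 1 := by
    rw [hvsmall]
    push_cast [Nat.cast_sub hr]
    ring
  rw [h3]
  ring

end SstarFacts
end CernyAux
namespace CernyAux
variable {n : ℕ} [NeZero n]

set_option maxHeartbeats 1000000 in
lemma Sstar_cost_lb {k c r : ℕ} (hn2 : 2 ≤ n) (hc : 1 ≤ c) (hcn : c ≤ n - 1) (hr : 1 ≤ r)
    (hrk : r ≤ k) (hk : 1 ≤ k) (hn : n = k * (c-1) + r) (hkn : k ≤ n)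
    (l : ZMod n) (len : ℕ) (hlen1 : 1 ≤ len) (hlenn : len ≤ n)
    (harc : ∀ x ∈ Sstar n k c r, arcMem l x len) :
    (n:ℤ) * ((n:ℤ) - (c:ℤ)) - ((r:ℤ) - 1) * (c:ℤ) ≤ cost l len := by
  set d := ((1 : ZMod n) - l).val with hd
  have hdn : d < n := ZMod.val_lt _
  have hrc_nonneg : (0:ℤ) ≤ ((r:ℤ) - 1) * (c:ℤ) := by
    have h1 : (1:ℤ) ≤ (r:ℤ) := by exact_mod_cast hr
    have h2 : (0:ℤ) ≤ (c:ℤ) := by positivity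
    nlinarith
  -- distance facts from arc membership
  have hdist : ∀ i, i < k → ((fstar c r i - 1) + d) % n < len := by
    intro i hi
    have hx : ((fstar c r i : ℕ) : ZMod n) ∈ Sstar n k c r :=
      Finset.mem_image_of_mem _ (Finset.mem_range.mpr hi)
    have := harc _ hx
    unfold arcMem at this
    rwa [arc_dist (fstar c r i) (fstar_pos hr i) 
      (le_trans (fstar_le (n := n) hc hr hrk hk hn hkn i hi) (by omega)) l] at this
  have hlast : fstar c r (k-1) + (c-1) = n := fstar_last (n := n) hc hr hrk hk hn
  rcases Nat.eq_zero_or_pos d with hd0 | hd1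
  · -- d = 0 : l = 1
    have hl1 : l = 1 := by
      have : ((1:ZMod n) - l) = 0 := by
        rw [← ZMod.val_eq_zero]
        omega
      have := sub_eq_zero.mp this
      exact this.symm
    subst hl1
    have hneg : ((-(1:ZMod n)).val) = n - 1 := by
      have h1 : ((1:ℕ) : ZMod n) = (1 : ZMod n) := by norm_cast
      rw [← h1]
      exact neg_cast_val (by omega) (by omega)
    have hlb : n - c + 1 ≤ len := by
      have := hdist (k-1) (by omega)
      rw [hd0, Nat.add_zero, Nat.mod_eq_of_lt (by omega)] at this
      omega
    unfold cost
    rw [hneg]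
    have hmul : (n:ℤ) * ((n:ℤ) - (c:ℤ) - 1) ≤ (n:ℤ) * ((len:ℤ) - 2) := by
      apply mul_le_mul_of_nonneg_left _ (by positivity)
      have : ((n - c + 1 : ℕ) : ℤ) ≤ (len : ℤ) := by exact_mod_cast hlb
      omega
    have hcast : ((n - 1 : ℕ) : ℤ) = (n:ℤ) - 1 := by omega
    rw [hcast]
    nlinarith
  · -- d ≥ 1
    have hnegl : ((-l).val : ℤ) = (d:ℤ) - 1 := by
      have hne : (1:ZMod n) - l ≠ 0 := by
        intro h
        rw [← ZMod.val_eq_zero] at h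
        omega
      have heq : -l = ((1:ZMod n) - l) - 1 := by ring
      rw [heq, val_pred hn2 _ hne, ← hd]
      omega
    have hcost : cost l len = (n:ℤ) * ((len:ℤ) - 2) + (d:ℤ) := by
      unfold cost
      rw [hnegl]
      ring
    rw [hcost]
    -- the largest index whose position is at most n - d
    set I : Finset ℕ := (Finset.range k).filter (fun i => fstar c r i ≤ n - d) with hI
    have hI0 : 0 ∈ I := by
      rw [hI, Finset.mem_filter, Finset.mem_range]
      refine ⟨by omega, ?_⟩
      have : fstar c r 0 = 1 := by
        unfold fstar
        omega
      omega
    have hIne : I.Nonempty := ⟨0, hI0⟩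
    set i := I.max' hIne with hi
    have hiI : i ∈ I := Finset.max'_mem I hIne
    have hik : i < k := by
      have := (Finset.mem_filter.mp hiI).1
      exact Finset.mem_range.mp this
    have hile : fstar c r i ≤ n - d := (Finset.mem_filter.mp hiI).2
    have hp1 : 1 ≤ fstar c r i := fstar_pos hr i
    have hlen_lb : fstar c r i + d ≤ len := by
      have := hdist i hik
      rw [Nat.mod_eq_of_lt (by omega : fstar c r i - 1 + d < n)] at this
      omega
    rcases Nat.lt_or_ge i (k-1) with hikk | hikk
    · -- i+1 is not in I
      have hnotin : ¬ (i+1 ∈ I) := by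
        intro hmem
        have := Finset.le_max' I (i+1) hmem
        omega
      have hbig : n - d < fstar c r (i+1) := by
        by_contra hcon
        push_neg at hcon
        exact hnotin (by rw [hI, Finset.mem_filter, Finset.mem_range]; exact ⟨by omega, hcon⟩)
      rcases Nat.lt_or_ge (i+1) r with hir | hir
      · -- small regime
        have hsi : fstar c r i = i * c + 1 := fstar_small hc i (by omega)
        have hsi1 : fstar c r (i+1) = (i+1) * c + 1 := fstar_small hc (i+1) (by omega)
        have hprod : (i+1) * c ≤ (r-1) * c := Nat.mul_le_mul_right _ (by omega)
        have hprod2 : (i+1) * c = i * c + c := by ring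
        -- len - 2 ≥ n - c - 1  and  d ≥ n - (r-1) c
        have hlen2 : n - c - 1 ≤ len - 2 := by omega
        have hdlb : n - (r-1) * c ≤ d := by omega
        have hmul : (n:ℤ) * ((n:ℤ) - (c:ℤ) - 1) ≤ (n:ℤ) * ((len:ℤ) - 2) := by
          apply mul_le_mul_of_nonneg_left _ (by positivity)
          have h1 : ((n - c - 1 : ℕ) : ℤ) ≤ ((len - 2 : ℕ) : ℤ) := by exact_mod_cast hlen2
          omega
        have hdZ : (n:ℤ) - ((r:ℤ) - 1) * (c:ℤ) ≤ (d:ℤ) := by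
          have h1 : ((n - (r-1) * c : ℕ) : ℤ) ≤ (d:ℤ) := by exact_mod_cast hdlb
          have h2 : (((r-1) * c : ℕ) : ℤ) = ((r:ℤ) - 1) * (c:ℤ) := by
            push_cast [Nat.cast_sub hr]
            ring
          omega
        nlinarith
      · -- large regime : gap is c - 1
        have hbi : fstar c r i = i * (c-1) + r := fstar_big i (by omega)
        have hbi1 : fstar c r (i+1) = (i+1) * (c-1) + r := fstar_big (i+1) (by omega)
        have hprod2 : (i+1) * (c-1) = i * (c-1) + (c-1) := by ring
        -- len ≥ n - c + 2
        have hlen2 : n - c - 0 ≤ len - 2 := by omega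
        have hmul : (n:ℤ) * ((n:ℤ) - (c:ℤ)) ≤ (n:ℤ) * ((len:ℤ) - 2) := by
          apply mul_le_mul_of_nonneg_left _ (by positivity)
          have h1 : ((n - c - 0 : ℕ) : ℤ) ≤ ((len - 2 : ℕ) : ℤ) := by exact_mod_cast hlen2
          omega
        have hdZ : (1:ℤ) ≤ (d:ℤ) := by exact_mod_cast hd1
        nlinarith
    · -- i = k-1
      have hieq : i = k-1 := by omega
      have hflast : fstar c r i + (c-1) = n := by rw [hieq]; exact hlast
      have hlen2 : n - c + 1 + d ≤ len := by omega
      have hmul : (n:ℤ) * ((n:ℤ) - (c:ℤ) - 1 + (d:ℤ)) ≤ (n:ℤ) * ((len:ℤ) - 2) := by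
        apply mul_le_mul_of_nonneg_left _ (by positivity)
        have h1 : ((n - c + 1 + d : ℕ) : ℤ) ≤ (len : ℤ) := by exact_mod_cast hlen2
        omega
      have hdZ : (1:ℤ) ≤ (d:ℤ) := by exact_mod_cast hd1
      nlinarith

lemma Sstar_phi_lb {k c r : ℕ} (hn2 : 2 ≤ n) (hc : 1 ≤ c) (hcn : c ≤ n - 1) (hr : 1 ≤ r)
    (hrk : r ≤ k) (hk : 1 ≤ k) (hn : n = k * (c-1) + r) (hkn : k ≤ n) :
    (n:ℤ) * ((n:ℤ) - (c:ℤ)) - ((r:ℤ) - 1) * (c:ℤ) ≤ Phi (Sstar n k c r) := by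
  unfold Phi
  apply Finset.le_inf'
  intro p hp
  rw [mem_cands] at hp
  exact Sstar_cost_lb hn2 hc hcn hr hrk hk hn hkn p.1 p.2 hp.1.1 hp.1.2 hp.2

end CernyAux
namespace CernyAux
variable {n : ℕ} [NeZero n]

lemma cardoso_one (hn2 : 2 ≤ n) : cardosoBound n 1 = 0 := by
  rw [cardoso_eq (le_refl 1) (by omega)]
  have hc : cdiv n 1 = n := by
    unfold cdiv
    simp
  rw [hc]
  have h1 : ((n - 1 * (n - 1) : ℕ) : ℤ) = 1 := by
    have : n - 1 * (n-1) = 1 := by omega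
    rw [this]
    norm_num
  rw [h1]
  ring

lemma image_nil (S : Finset (ZMod n)) :
    (S.image fun q => actW (cerny n) q []) = S := by
  have h : (fun q : ZMod n => actW (cerny n) q []) = fun q : ZMod n => q := rfl
  rw [h, Finset.image_id']

end CernyAux


open CernyAux in
/-- In the Černý automaton, every nonempty subset S can be synchronized by a
word of length at most Cardoso's bound, and for each size the bound is tight. -/
theorem cerny_subset_synchronization (n : ℕ) [NeZero n] (hn : 2 ≤ n) :
    (∀ S : Finset (ZMod n), S.Nonempty →
      ∃ w : List Bool, (S.image (fun q => actW (cerny n) q w)).card = 1 ∧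
        (w.length : ℤ) ≤ cardosoBound n S.card) ∧
    (∀ k : ℕ, 1 ≤ k → k ≤ n → ∃ S : Finset (ZMod n), S.card = k ∧
      (∃ w : List Bool, (S.image (fun q => actW (cerny n) q w)).card = 1 ∧
        (w.length : ℤ) = cardosoBound n k) ∧
      (∀ w : List Bool, (S.image (fun q => actW (cerny n) q w)).card = 1 →
        cardosoBound n k ≤ (w.length : ℤ))) := by
  constructor
  · -- part 1 : upper bound for every nonempty subset
    intro S hS
    by_cases h1 : S.card = 1
    · refine ⟨[], ?_, ?_⟩
      · rw [image_nil]
        exact h1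
      · rw [h1, cardoso_one hn]
        simp
    · have hk2 : 2 ≤ S.card := by
        have := Finset.card_pos.mpr hS
        omega
      obtain ⟨l, len, h2l, hln, hmem, hcost⟩ := exists_good_arc hn S hk2
      refine ⟨wordFor l len, ?_, ?_⟩
      · exact sync_card_one hS (fun x hx => wordFor_sync hn l len h2l hln x (hmem x hx))
      · rw [wordFor_length hn l len h2l]
        exact hcost
  · -- part 2 : tightness
    intro k hk1 hkn
    by_cases hk : k = 1
    · subst hk
      refine ⟨{(0 : ZMod n)}, Finset.card_singleton _, ⟨[], ?_, ?_⟩, ?_⟩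
      · rw [image_nil, Finset.card_singleton]
      · rw [cardoso_one hn]
        simp
      · intro w _
        rw [cardoso_one hn]
        positivity
    · have hk2 : 2 ≤ k := by omega
      set c := cdiv n k with hcdef
      obtain ⟨hc1, hc2, hc3⟩ := cdiv_spec hk1 hkn
      rw [← hcdef] at hc1 hc2 hc3
      set r : ℕ := n - k * (c - 1) with hrdef
      have hkc : k * (c - 1) + k = k * c := by
        have h : c - 1 + 1 = c := by omega
        calc k * (c-1) + k = k * ((c-1)+1) := by ring
          _ = k * c := by rw [h]
      have hnr : n = k * (c - 1) + r := by omega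
      have hr1 : 1 ≤ r := by omega
      have hrk : r ≤ k := by omega
      have hcn : c ≤ n - 1 := by
        by_contra hcon
        push_neg at hcon
        have h1 : k * n ≤ k * c := Nat.mul_le_mul_left k (by omega)
        have h2 : 2 * n ≤ k * n := Nat.mul_le_mul_right n hk2
        omega
      have hlen2 : 2 ≤ n + 1 - c := by omega
      have hlenn : n + 1 - c ≤ n := by omega
      have hBeq : cardosoBound n k = (n:ℤ) * ((n:ℤ) - (c:ℤ)) - ((r:ℤ) - 1) * (c:ℤ) := by
        rw [cardoso_eq hk1 hkn, ← hcdef, ← hrdef]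
      refine ⟨Sstar n k c r, Sstar_card hc1 hr1 hrk (by omega) hnr hkn, ⟨?_, ?_, ?_⟩, ?_⟩
      · exact wordFor ((fstar c r (r-1) : ℕ) : ZMod n) (n + 1 - c)
      · exact sync_card_one (Sstar_nonempty (by omega))
          (fun x hx => wordFor_sync hn _ _ hlen2 hlenn x
            (Sstar_arc hn hc1 hcn hr1 hrk (by omega) hnr hkn x hx))
      · rw [wordFor_length hn _ _ hlen2,
          Sstar_cost hn hc1 hcn hr1 hrk (by omega) hnr hkn, hBeq]
      · intro w hw
        have hphi := lower hn w (Sstar n k c r) hw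
        have hlb := Sstar_phi_lb (k := k) hn hc1 hcn hr1 hrk (by omega) hnr hkn
        rw [hBeq]
        linarith
end
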